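/- arXiv:0909.4509 — 3 statements merged into one kernel-verified Lean document; each statement's English description precedes it below -/
import Mathlib

section
/- (Continuity of division.) Let r > 0, let f be a power series analytic on the closed ball B_{≤r}, and let P ∈ F[z] be a nonzero polynomial which is r-dominant, i.e., K(P,r) = deg P. Then there exist a unique power series q analytic on B_{≤r} and a unique polynomial R ∈ F[z] such that (i) f = Pq + R, (ii) deg R < deg P, (iii) |R|_r ≤ |f|_r, and (iv) |q|_r ≤ |f|_r / |P|_r. -/
open Filter Topology

variable {F : Type*} [NontriviallyNormedField F]

/-- Value of the power series with coefficients `a` at `z`. -/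
noncomputable def psEval (a : ℕ → F) (z : F) : F := ∑' n : ℕ, a n * z ^ n

/-- Value of the Laurent series with coefficients `c` at `z`. -/
noncomputable def lEval (c : ℤ → F) (z : F) : F := ∑' n : ℤ, c n * z ^ n

/-- Gauss norm `|f|_r = sup_n |a_n| r^n` of a power series. -/
noncomputable def pNorm (a : ℕ → F) (r : ℝ) : ℝ := ⨆ n : ℕ, ‖a n‖ * r ^ n

/-- Gauss norm `|f|_r = sup_n |c_n| r^n` of a Laurent series. -/
noncomputable def lNorm (c : ℤ → F) (r : ℝ) : ℝ := ⨆ n : ℤ, ‖c n‖ * r ^ n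

/-- The Laurent series `c` is analytic on the annulus `A[r1,r2]`. -/
def LaurentOn (c : ℤ → F) (r1 r2 : ℝ) : Prop :=
  ∀ r : ℝ, r1 ≤ r → r ≤ r2 → Tendsto (fun n : ℤ => ‖c n‖ * r ^ n) cofinite (nhds 0)

/-- The Laurent series `c` is analytic on `A[r1,∞)`. -/
def LaurentOnInfty (c : ℤ → F) (r1 : ℝ) : Prop :=
  ∀ r : ℝ, r1 ≤ r → Tendsto (fun n : ℤ => ‖c n‖ * r ^ n) cofinite (nhds 0)

/-- The power series `a` is analytic on the closed ball `B_{≤ r}`. -/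
def PSOnClosed (a : ℕ → F) (r : ℝ) : Prop :=
  Tendsto (fun n : ℕ => ‖a n‖ * r ^ n) atTop (nhds 0)

/-- The power series `a` is analytic on the open ball `B_{< R}`. -/
def PSOnOpen (a : ℕ → F) (R : ℝ) : Prop :=
  ∀ r : ℝ, 0 < r → r < R → Tendsto (fun n : ℕ => ‖a n‖ * r ^ n) atTop (nhds 0)

/-- The power series `a` is entire: it converges on all of `F`. -/
def Entire (a : ℕ → F) : Prop :=
  ∀ r : ℝ, 0 < r → Tendsto (fun n : ℕ => ‖a n‖ * r ^ n) atTop (nhds 0)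

/-- `k(f,r)` for a Laurent series. -/
noncomputable def kk (c : ℤ → F) (r : ℝ) : ℤ := sInf {n : ℤ | ‖c n‖ * r ^ n = lNorm c r}

/-- `K(f,r)` for a Laurent series. -/
noncomputable def KK (c : ℤ → F) (r : ℝ) : ℤ := sSup {n : ℤ | ‖c n‖ * r ^ n = lNorm c r}

/-- Product of two Laurent series. -/
noncomputable def laurentMul (c d : ℤ → F) : ℤ → F := fun n => ∑' i : ℤ, c i * d (n - i)

/-- The Laurent series `1`. -/
noncomputable def laurentOne : ℤ → F := fun n => if n = 0 then 1 else 0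

/-- Gauss norm of a polynomial. -/
noncomputable def pgNorm (P : Polynomial F) (r : ℝ) : ℝ := ⨆ n : ℕ, ‖P.coeff n‖ * r ^ n

/-- `k(P,r)` for a polynomial. -/
noncomputable def kP (P : Polynomial F) (r : ℝ) : ℕ :=
  sInf {n : ℕ | ‖P.coeff n‖ * r ^ n = pgNorm P r}

/-- `K(P,r)` for a polynomial. -/
noncomputable def KP (P : Polynomial F) (r : ℝ) : ℕ :=
  sSup {n : ℕ | ‖P.coeff n‖ * r ^ n = pgNorm P r}

/-- A polynomial regarded as a Laurent series. -/
noncomputable def polyToLaurent (P : Polynomial F) : ℤ → F :=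
  fun n => if 0 ≤ n then P.coeff n.toNat else 0

/-- `f` vanishes to order exactly `m` at `z0`, as witnessed by a convergent local
power series expansion of `f` about `z0`. -/
def HasOrderAt (f : F → F) (z0 : F) (m : ℕ) : Prop :=
  ∃ δ > (0 : ℝ), ∃ b : ℕ → F,
    (∀ z : F, ‖z - z0‖ < δ → f z = ∑' n : ℕ, b n * (z - z0) ^ n) ∧
    (∀ j < m, b j = 0) ∧ b m ≠ 0

/-- Order of vanishing at `0` of a power series. -/
noncomputable def ord0 (c : ℕ → F) : ℕ := sInf {n : ℕ | c n ≠ 0}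

/-- Radius of convergence of a power series: the sup of the radii `r` such that
the terms `|c_j| r^j` tend to `0`. -/
noncomputable def convRadius (c : ℕ → F) : ENNReal :=
  ⨆ (r : NNReal) (_ : Tendsto (fun j : ℕ => ‖c j‖ * (r : ℝ) ^ j) atTop (nhds 0)), (r : ENNReal)

section AuxDiv

variable {r : ℝ}

lemma na_add (hna : IsNonarchimedean (fun x : F => ‖x‖)) (a b : F) :
    ‖a + b‖ ≤ max ‖a‖ ‖b‖ := hna a b

lemma na_sub (hna : IsNonarchimedean (fun x : F => ‖x‖)) (a b : F) :
    ‖a - b‖ ≤ max ‖a‖ ‖b‖ := by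
  have := hna a (-b)
  simpa [sub_eq_add_neg] using this

lemma nonarch_sum_le (hna : IsNonarchimedean (fun x : F => ‖x‖)) {ι : Type*} (s : Finset ι)
    (g : ι → F) {C : ℝ} (hC : 0 ≤ C) (h : ∀ i ∈ s, ‖g i‖ ≤ C) : ‖∑ i ∈ s, g i‖ ≤ C := by
  classical
  induction s using Finset.induction_on with
  | empty => simpa using hC
  | @insert a s' hx ih =>
      rw [Finset.sum_insert hx]
      refine (na_add hna _ _).trans (max_le (h a (Finset.mem_insert_self a s')) ?_)
      exact ih fun i hi => h i (Finset.mem_insert_of_mem hi)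

lemma nonarch_sum_lt (hna : IsNonarchimedean (fun x : F => ‖x‖)) {ι : Type*} (s : Finset ι)
    (g : ι → F) {C : ℝ} (hC : 0 < C) (h : ∀ i ∈ s, ‖g i‖ < C) : ‖∑ i ∈ s, g i‖ < C := by
  classical
  induction s using Finset.induction_on with
  | empty => simpa using hC
  | @insert a s' hx ih =>
      rw [Finset.sum_insert hx]
      refine lt_of_le_of_lt (na_add hna _ _) (max_lt (h a (Finset.mem_insert_self a s')) ?_)
      exact ih fun i hi => h i (Finset.mem_insert_of_mem hi)

lemma nonarch_add_eq (hna : IsNonarchimedean (fun x : F => ‖x‖)) {a b : F}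
    (h : ‖b‖ < ‖a‖) : ‖a + b‖ = ‖a‖ := by
  refine le_antisymm ((na_add hna a b).trans (max_le le_rfl h.le)) ?_
  by_contra hlt
  push_neg at hlt
  have h2 : ‖a‖ ≤ max ‖a + b‖ ‖b‖ := by
    have := na_add hna (a + b) (-b)
    simpa using this
  exact absurd h2 (not_le.mpr (max_lt hlt h))

lemma psOnClosed_bdd {a : ℕ → F} (ha : PSOnClosed a r) :
    BddAbove (Set.range fun n => ‖a n‖ * r ^ n) := ha.bddAbove_range

lemma le_pNorm {a : ℕ → F} (ha : PSOnClosed a r) (n : ℕ) : ‖a n‖ * r ^ n ≤ pNorm a r :=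
  le_ciSup (psOnClosed_bdd ha) n

lemma pNorm_le {a : ℕ → F} {C : ℝ} (h : ∀ n, ‖a n‖ * r ^ n ≤ C) : pNorm a r ≤ C := ciSup_le h

lemma pNorm_nonneg (a : ℕ → F) (hr : 0 ≤ r) : 0 ≤ pNorm a r :=
  Real.iSup_nonneg fun n => mul_nonneg (norm_nonneg _) (pow_nonneg hr n)

lemma pNorm_pos {a : ℕ → F} (hr : 0 < r) (ha : PSOnClosed a r) {n : ℕ} (hn : a n ≠ 0) :
    0 < pNorm a r :=
  lt_of_lt_of_le (mul_pos (norm_pos_iff.mpr hn) (pow_pos hr n)) (le_pNorm ha n)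

lemma poly_psOnClosed (Q : Polynomial F) : PSOnClosed Q.coeff r := by
  have h : ∀ᶠ n in atTop, (0 : ℝ) = ‖Q.coeff n‖ * r ^ n := by
    filter_upwards [eventually_gt_atTop Q.natDegree] with n hn
    simp [Polynomial.coeff_eq_zero_of_natDegree_lt hn]
  exact tendsto_const_nhds.congr' h

lemma pgNorm_eq (Q : Polynomial F) : pgNorm Q r = pNorm Q.coeff r := rfl

/-- dominant index: largest index where the sup is attained. -/
lemma exists_dom_index {a : ℕ → F} (hr : 0 < r) (ha : PSOnClosed a r)
    (hne : ∃ n, a n ≠ 0) :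
    ∃ K, ‖a K‖ * r ^ K = pNorm a r ∧ ∀ j, K < j → ‖a j‖ * r ^ j < pNorm a r := by
  obtain ⟨n₀, hn₀⟩ := hne
  set s := pNorm a r with hs
  have hpos : 0 < s := pNorm_pos hr ha hn₀
  obtain ⟨N, hN⟩ := (Metric.tendsto_atTop.mp ha) (s / 2) (by positivity)
  have hN' : ∀ n, N ≤ n → ‖a n‖ * r ^ n < s / 2 := by
    intro n hn
    have := hN n hn
    rwa [Real.dist_eq, sub_zero, abs_of_nonneg (by positivity)] at this
  set S := {n : ℕ | ‖a n‖ * r ^ n = s} with hS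
  have hSb : BddAbove S := by
    refine ⟨N, fun n hn => ?_⟩
    by_contra hc
    push_neg at hc
    have := hN' n hc.le
    rw [hn] at this
    linarith
  have hSne : S.Nonempty := by
    by_contra hc
    rw [Set.not_nonempty_iff_eq_empty] at hc
    have hrne : (Finset.range (N + 1)).Nonempty := ⟨0, by simp⟩
    set B := (Finset.range (N + 1)).sup' hrne (fun m => ‖a m‖ * r ^ m) with hB
    have hub : ∀ n, ‖a n‖ * r ^ n ≤ max B (s / 2) := by
      intro n
      rcases le_or_gt n N with h | h
      · exact le_max_of_le_left (Finset.le_sup' (fun m => ‖a m‖ * r ^ m)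
          (Finset.mem_range.mpr (Nat.lt_succ_of_le h)))
      · exact le_max_of_le_right (hN' n h.le).le
    have hB2 : s ≤ max B (s / 2) := pNorm_le hub
    obtain ⟨m, _, hm2⟩ := Finset.exists_mem_eq_sup' hrne (fun m => ‖a m‖ * r ^ m)
    have hmem : m ∉ S := by rw [hc]; exact Set.notMem_empty m
    have hmlt : ‖a m‖ * r ^ m < s := lt_of_le_of_ne (le_pNorm ha m) (by exact fun h => hmem h)
    have hBlt : B < s := by rw [hB, hm2]; exact hmlt
    have : max B (s / 2) < s := max_lt hBlt (by linarith)
    linarith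
  refine ⟨sSup S, Nat.sSup_mem hSne hSb, fun j hj => ?_⟩
  rcases lt_or_ge (‖a j‖ * r ^ j) s with h | h
  · exact h
  · have : j ∈ S := le_antisymm (le_pNorm ha j) h
    exact absurd (le_csSup hSb this) (not_le.mpr hj)

end AuxDiv

section Aux2

variable {F : Type*} [NontriviallyNormedField F] {r : ℝ}

lemma pgNorm_pos {P : Polynomial F} (hr : 0 < r) (hP : P ≠ 0) : 0 < pgNorm P r := by
  rw [pgNorm_eq]
  exact pNorm_pos hr (poly_psOnClosed P) (n := P.natDegree)
    (by simpa [Polynomial.coeff_natDegree] using Polynomial.leadingCoeff_ne_zero.mpr hP)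

lemma dom_coeff {P : Polynomial F} (hr : 0 < r) (hP : P ≠ 0)
    (hdom : KP P r = P.natDegree) :
    ‖P.coeff P.natDegree‖ * r ^ P.natDegree = pgNorm P r := by
  set S := {n : ℕ | ‖P.coeff n‖ * r ^ n = pgNorm P r} with hS
  have hpos : 0 < pgNorm P r := pgNorm_pos hr hP
  have hne : ∃ n, P.coeff n ≠ 0 := by
    refine ⟨P.natDegree, ?_⟩
    simpa [Polynomial.coeff_natDegree] using Polynomial.leadingCoeff_ne_zero.mpr hP
  obtain ⟨K, hK, -⟩ := exists_dom_index hr (poly_psOnClosed P) hne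
  have hSne : S.Nonempty := ⟨K, hK⟩
  have hSb : BddAbove S := by
    refine ⟨P.natDegree, fun n hn => ?_⟩
    have hn0 : P.coeff n ≠ 0 := by
      intro h0
      rw [Set.mem_setOf_eq, h0] at hn
      simp at hn
      linarith [hn ▸ hpos]
    exact Polynomial.le_natDegree_of_ne_zero hn0
  have : sSup S ∈ S := Nat.sSup_mem hSne hSb
  rwa [show sSup S = P.natDegree from hdom] at this

lemma conv_le (hna : IsNonarchimedean (fun x : F => ‖x‖)) (hr : 0 < r)
    (P : Polynomial F) {c : ℕ → F} (hc : PSOnClosed c r) (n : ℕ) :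
    ‖∑ i ∈ Finset.range (n + 1), P.coeff i * c (n - i)‖ * r ^ n
      ≤ pgNorm P r * pNorm c r := by
  have hrn : (0 : ℝ) < r ^ n := pow_pos hr n
  rw [← le_div_iff₀ hrn]
  have hCnn : (0:ℝ) ≤ pgNorm P r * pNorm c r / r ^ n :=
    div_nonneg (mul_nonneg (pgNorm_eq P ▸ pNorm_nonneg _ hr.le) (pNorm_nonneg _ hr.le)) hrn.le
  refine nonarch_sum_le hna _ _ hCnn ?_
  intro i hi
  rw [Finset.mem_range, Nat.lt_succ_iff] at hi
  rw [le_div_iff₀ hrn, norm_mul]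
  have hsplit : r ^ n = r ^ i * r ^ (n - i) := by
    rw [← pow_add, Nat.add_sub_cancel' hi]
  calc ‖P.coeff i‖ * ‖c (n - i)‖ * r ^ n
      = (‖P.coeff i‖ * r ^ i) * (‖c (n - i)‖ * r ^ (n - i)) := by rw [hsplit]; ring
    _ ≤ pgNorm P r * pNorm c r := by
        refine mul_le_mul (pgNorm_eq P ▸ le_pNorm (poly_psOnClosed P) i)
          (le_pNorm hc _) (by positivity) ?_
        rw [pgNorm_eq]; exact pNorm_nonneg _ hr.le

lemma conv_dom (hna : IsNonarchimedean (fun x : F => ‖x‖)) (hr : 0 < r)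
    {P : Polynomial F} (hP : P ≠ 0) (hdom : KP P r = P.natDegree)
    {c : ℕ → F} (hc : PSOnClosed c r) (hcpos : 0 < pNorm c r) {K : ℕ}
    (hK : ‖c K‖ * r ^ K = pNorm c r) (hK' : ∀ j, K < j → ‖c j‖ * r ^ j < pNorm c r) :
    ‖∑ i ∈ Finset.range (K + P.natDegree + 1), P.coeff i * c (K + P.natDegree - i)‖
      * r ^ (K + P.natDegree) = pgNorm P r * pNorm c r := by
  classical
  set d := P.natDegree with hd
  set n := K + d with hn
  have hrn : (0 : ℝ) < r ^ n := pow_pos hr n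
  have hPpos : 0 < pgNorm P r := pgNorm_pos hr hP
  have hdmem : d ∈ Finset.range (n + 1) := Finset.mem_range.mpr (by omega)
  have hdterm : ‖P.coeff d * c (n - d)‖ * r ^ n = pgNorm P r * pNorm c r := by
    have hnd : n - d = K := by omega
    rw [hnd, norm_mul]
    have hsplit : r ^ n = r ^ d * r ^ K := by rw [← pow_add]; rw [hn]; ring_nf
    rw [hsplit, ← dom_coeff hr hP hdom, ← hK]
    ring
  have hother : ∀ i ∈ (Finset.range (n + 1)).erase d,
      ‖P.coeff i * c (n - i)‖ < pgNorm P r * pNorm c r / r ^ n := by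
    intro i hi
    obtain ⟨hid, hirange⟩ := Finset.mem_erase.mp hi
    rw [Finset.mem_range, Nat.lt_succ_iff] at hirange
    rw [lt_div_iff₀ hrn, norm_mul]
    rcases lt_or_gt_of_ne hid with hlt | hgt
    · have hni : K < n - i := by omega
      have hsplit : r ^ n = r ^ i * r ^ (n - i) := by
        rw [← pow_add, Nat.add_sub_cancel' hirange]
      calc ‖P.coeff i‖ * ‖c (n - i)‖ * r ^ n
          = (‖P.coeff i‖ * r ^ i) * (‖c (n - i)‖ * r ^ (n - i)) := by rw [hsplit]; ring
        _ ≤ pgNorm P r * (‖c (n - i)‖ * r ^ (n - i)) := by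
            refine mul_le_mul_of_nonneg_right
              (pgNorm_eq P ▸ le_pNorm (poly_psOnClosed P) i) (by positivity)
        _ < pgNorm P r * pNorm c r :=
            mul_lt_mul_of_pos_left (hK' _ hni) hPpos
    · have : P.coeff i = 0 := Polynomial.coeff_eq_zero_of_natDegree_lt hgt
      rw [this]
      simp only [norm_zero, zero_mul]
      exact mul_pos hPpos hcpos
  have hsum := Finset.add_sum_erase _ (fun i => P.coeff i * c (n - i)) hdmem
  rw [← hsum]
  by_cases hempty : ((Finset.range (n + 1)).erase d) = ∅
  · rw [hempty]
    simpa using hdterm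
  · have hlt : ‖∑ i ∈ (Finset.range (n + 1)).erase d, P.coeff i * c (n - i)‖
        < pgNorm P r * pNorm c r / r ^ n :=
      nonarch_sum_lt hna _ _ (div_pos (mul_pos hPpos hcpos) hrn) hother
    have hdnorm : ‖P.coeff d * c (n - d)‖ = pgNorm P r * pNorm c r / r ^ n := by
      rw [eq_div_iff hrn.ne']; exact hdterm
    rw [nonarch_add_eq hna (by rw [hdnorm]; exact hlt)]
    exact hdterm

end Aux2

section Aux3

variable {F : Type*} [NontriviallyNormedField F] {r : ℝ}

lemma div_est (hna : IsNonarchimedean (fun x : F => ‖x‖)) (hr : 0 < r)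
    {P A Q Rm : Polynomial F} (hP : P ≠ 0) (hdom : KP P r = P.natDegree)
    (hA : A = P * Q + Rm) (hdeg : Rm.degree < P.degree) :
    pgNorm P r * pgNorm Q r ≤ pgNorm A r ∧ pgNorm Rm r ≤ pgNorm A r := by
  have hAnn : 0 ≤ pgNorm A r := pgNorm_eq A ▸ pNorm_nonneg _ hr.le
  have hPQ : pgNorm P r * pgNorm Q r ≤ pgNorm A r := by
    by_cases hQ : Q = 0
    · rw [hQ]
      rw [show pgNorm (0 : Polynomial F) r = 0 by
        simp [pgNorm]]
      simpa using hAnn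
    · obtain ⟨K, hK, hK'⟩ := exists_dom_index hr (poly_psOnClosed Q)
        (by simpa [Polynomial.ext_iff, not_forall] using hQ)
      set d := P.natDegree with hd
      have hQpos : 0 < pNorm Q.coeff r :=
        pNorm_pos hr (poly_psOnClosed Q) (n := Q.natDegree)
          (by simpa [Polynomial.coeff_natDegree] using Polynomial.leadingCoeff_ne_zero.mpr hQ)
      have hRz : Rm.coeff (K + d) = 0 := by
        refine Polynomial.coeff_eq_zero_of_degree_lt (lt_of_lt_of_le hdeg ?_)
        rw [Polynomial.degree_eq_natDegree hP]
        exact_mod_cast Nat.le_add_left d K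
      have hAc : A.coeff (K + d) = ∑ i ∈ Finset.range (K + d + 1), P.coeff i * Q.coeff (K + d - i) := by
        rw [hA, Polynomial.coeff_add, hRz, add_zero, Polynomial.coeff_mul,
          Finset.Nat.sum_antidiagonal_eq_sum_range_succ_mk]
      have := conv_dom hna hr hP hdom (poly_psOnClosed Q) hQpos hK hK'
      rw [← hAc] at this
      calc pgNorm P r * pgNorm Q r = ‖A.coeff (K + d)‖ * r ^ (K + d) := by
            rw [this, pgNorm_eq Q]
        _ ≤ pgNorm A r := pgNorm_eq A ▸ le_pNorm (poly_psOnClosed A) _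
  refine ⟨hPQ, ?_⟩
  rw [pgNorm_eq]
  refine pNorm_le fun n => ?_
  have hRn : Rm.coeff n = A.coeff n - (P * Q).coeff n := by rw [hA]; ring_nf; simp
  rw [hRn]
  have h1 : ‖A.coeff n - (P * Q).coeff n‖ ≤ max ‖A.coeff n‖ ‖(P * Q).coeff n‖ :=
    na_sub hna _ _
  have h2 : ‖A.coeff n - (P * Q).coeff n‖ * r ^ n
      ≤ max (‖A.coeff n‖ * r ^ n) (‖(P * Q).coeff n‖ * r ^ n) := by
    rw [← max_mul_of_nonneg _ _ (pow_pos hr n).le]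
    exact mul_le_mul_of_nonneg_right h1 (pow_pos hr n).le
  refine h2.trans (max_le (pgNorm_eq A ▸ le_pNorm (poly_psOnClosed A) n) ?_)
  have h3 : (P * Q).coeff n = ∑ i ∈ Finset.range (n + 1), P.coeff i * Q.coeff (n - i) := by
    rw [Polynomial.coeff_mul, Finset.Nat.sum_antidiagonal_eq_sum_range_succ_mk]
  rw [h3]
  exact (conv_le hna hr P (poly_psOnClosed Q) n).trans (by rw [← pgNorm_eq]; exact hPQ)

lemma nonarch_telescope (hna : IsNonarchimedean (fun x : F => ‖x‖)) (u : ℕ → F) {C : ℝ}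
    (hC : 0 ≤ C) (N : ℕ) (h : ∀ j, N ≤ j → ‖u (j + 1) - u j‖ ≤ C) :
    ∀ m, N ≤ m → ‖u m - u N‖ ≤ C := by
  intro m hm
  induction m with
  | zero => simpa [Nat.le_zero.mp hm] using hC
  | succ k ih =>
      rcases Nat.lt_or_ge N (k + 1) with hlt | hge
      · have hk : N ≤ k := by omega
        have : u (k + 1) - u N = (u (k + 1) - u k) + (u k - u N) := by ring
        rw [this]
        exact (na_add hna _ _).trans (max_le (h k hk) (ih hk))
      · have : N = k + 1 := by omega
        simpa [this] using hC

lemma nonarch_cauchy (hna : IsNonarchimedean (fun x : F => ‖x‖)) (u : ℕ → F)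
    (h : Filter.Tendsto (fun N => ‖u (N + 1) - u N‖) Filter.atTop (nhds 0)) :
    CauchySeq u := by
  rw [Metric.cauchySeq_iff']
  intro ε hε
  obtain ⟨N, hN⟩ := (Metric.tendsto_atTop.mp h) (ε / 2) (by linarith)
  have hN' : ∀ j, N ≤ j → ‖u (j + 1) - u j‖ ≤ ε / 2 := by
    intro j hj
    have := hN j hj
    rw [Real.dist_eq, sub_zero, abs_of_nonneg (norm_nonneg _)] at this
    linarith
  refine ⟨N, fun n hn => ?_⟩
  rw [dist_eq_norm]
  exact lt_of_le_of_lt (nonarch_telescope hna u (by linarith) N hN' n hn) (by linarith)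

lemma pgNorm_monomial (hr : 0 < r) (m : ℕ) (a : F) :
    pgNorm (Polynomial.monomial m a) r = ‖a‖ * r ^ m := by
  apply le_antisymm
  · rw [pgNorm_eq]
    refine pNorm_le fun n => ?_
    rw [Polynomial.coeff_monomial]
    by_cases h : m = n
    · subst h; simp
    · simp only [h, if_false, norm_zero, zero_mul]
      positivity
  · have := le_pNorm (r := r) (poly_psOnClosed (Polynomial.monomial m a)) m
    rw [← pgNorm_eq] at this
    simpa [Polynomial.coeff_monomial] using this

/-- Uniqueness of the division data. -/
lemma division_unique (hna : IsNonarchimedean (fun x : F => ‖x‖)) (hr : 0 < r)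
    {P : Polynomial F} (hP : P ≠ 0) (hdom : KP P r = P.natDegree) {f : ℕ → F}
    (x y : (ℕ → F) × Polynomial F)
    (hx1 : PSOnClosed x.1 r)
    (hx2 : ∀ n : ℕ, f n = (∑ i ∈ Finset.range (n + 1), P.coeff i * x.1 (n - i)) + x.2.coeff n)
    (hx3 : x.2.degree < P.degree)
    (hy1 : PSOnClosed y.1 r)
    (hy2 : ∀ n : ℕ, f n = (∑ i ∈ Finset.range (n + 1), P.coeff i * y.1 (n - i)) + y.2.coeff n)
    (hy3 : y.2.degree < P.degree) : x = y := by
  obtain ⟨q, R⟩ := x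
  obtain ⟨q', R'⟩ := y
  simp only at hx1 hx2 hx3 hy1 hy2 hy3 ⊢
  set c : ℕ → F := fun n => q n - q' n with hc
  have hcps : PSOnClosed c r := by
    have hle : ∀ n, ‖c n‖ * r ^ n ≤ max (‖q n‖ * r ^ n) (‖q' n‖ * r ^ n) := by
      intro n
      rw [← max_mul_of_nonneg _ _ (pow_pos hr n).le]
      exact mul_le_mul_of_nonneg_right (na_sub hna _ _) (pow_pos hr n).le
    have hmax : Filter.Tendsto (fun n => max (‖q n‖ * r ^ n) (‖q' n‖ * r ^ n))
        Filter.atTop (nhds 0) := by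
      have := hx1.max hy1
      simpa using this
    exact squeeze_zero (fun n => by positivity) hle hmax
  have hczero : ∀ n, c n = 0 := by
    by_contra hcon
    push_neg at hcon
    obtain ⟨K, hK, hK'⟩ := exists_dom_index hr hcps hcon
    set d := P.natDegree with hd
    have hcpos : 0 < pNorm c r := by
      obtain ⟨n, hn⟩ := hcon
      exact pNorm_pos hr hcps hn
    have hzero : (∑ i ∈ Finset.range (K + d + 1), P.coeff i * c (K + d - i)) = 0 := by
      have h1 := hx2 (K + d)
      have h2 := hy2 (K + d)
      have hRz : R.coeff (K + d) = 0 := by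
        refine Polynomial.coeff_eq_zero_of_degree_lt (lt_of_lt_of_le hx3 ?_)
        rw [Polynomial.degree_eq_natDegree hP]
        exact_mod_cast Nat.le_add_left d K
      have hRz' : R'.coeff (K + d) = 0 := by
        refine Polynomial.coeff_eq_zero_of_degree_lt (lt_of_lt_of_le hy3 ?_)
        rw [Polynomial.degree_eq_natDegree hP]
        exact_mod_cast Nat.le_add_left d K
      rw [hRz, add_zero] at h1
      rw [hRz', add_zero] at h2
      have : (∑ i ∈ Finset.range (K + d + 1), P.coeff i * q (K + d - i))
          = ∑ i ∈ Finset.range (K + d + 1), P.coeff i * q' (K + d - i) := by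
        rw [← h1, ← h2]
      calc (∑ i ∈ Finset.range (K + d + 1), P.coeff i * c (K + d - i))
          = (∑ i ∈ Finset.range (K + d + 1), P.coeff i * q (K + d - i))
            - ∑ i ∈ Finset.range (K + d + 1), P.coeff i * q' (K + d - i) := by
            rw [← Finset.sum_sub_distrib]
            exact Finset.sum_congr rfl fun i _ => by rw [hc]; ring
        _ = 0 := by rw [this, sub_self]
    have := conv_dom hna hr hP hdom hcps hcpos hK hK'
    rw [hzero] at this
    simp only [norm_zero, zero_mul] at this
    have hPpos : 0 < pgNorm P r := pgNorm_pos hr hP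
    nlinarith
  have hq : q = q' := funext fun n => sub_eq_zero.mp (hczero n)
  subst hq
  have hR : R = R' := by
    ext n
    have h1 := hx2 n
    have h2 := hy2 n
    have := h1.symm.trans h2
    exact add_left_cancel this
  rw [hR]

end Aux3

/-- **Continuity of division.** If `f` is analytic on `B_{≤r}` and `P ≠ 0` is an
`r`-dominant polynomial (`K(P,r) = deg P`), then there are a unique power series `q`
analytic on `B_{≤r}` and a unique polynomial `R` with `f = Pq + R`, `deg R < deg P`,
`|R|_r ≤ |f|_r`, and `|q|_r ≤ |f|_r / |P|_r`. -/
theorem stmt11 {F : Type*} [NontriviallyNormedField F] [CompleteSpace F] [IsAlgClosed F]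
    (hna : IsNonarchimedean (fun x : F => ‖x‖))
    (r : ℝ) (hr : 0 < r)
    (f : ℕ → F) (hf : PSOnClosed f r)
    (P : Polynomial F) (hP : P ≠ 0) (hdom : KP P r = P.natDegree) :
    ∃! qR : (ℕ → F) × Polynomial F,
      PSOnClosed qR.1 r ∧
      (∀ n : ℕ, f n = (∑ i ∈ Finset.range (n + 1), P.coeff i * qR.1 (n - i)) + qR.2.coeff n) ∧
      qR.2.degree < P.degree ∧
      pgNorm qR.2 r ≤ pNorm f r ∧
      pNorm qR.1 r ≤ pNorm f r / pgNorm P r := by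
  classical
  set d := P.natDegree with hd
  set P' := P * Polynomial.C P.leadingCoeff⁻¹ with hP'
  have hmonic : P'.Monic := Polynomial.monic_mul_leadingCoeff_inv hP
  have hdegP' : P'.degree = P.degree := Polynomial.degree_mul_leadingCoeff_inv P hP
  set fN : ℕ → Polynomial F := fun N => ∑ j ∈ Finset.range (N + 1), Polynomial.monomial j (f j)
    with hfN
  set Q : ℕ → Polynomial F := fun N => (fN N /ₘ P') * Polynomial.C P.leadingCoeff⁻¹ with hQ
  set Rm : ℕ → Polynomial F := fun N => fN N %ₘ P' with hRm
  have hid : ∀ N, fN N = P * Q N + Rm N := by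
    intro N
    have h := Polynomial.modByMonic_add_div (fN N) P'
    have h2 : P * Q N + Rm N = fN N %ₘ P' + P' * (fN N /ₘ P') := by
      simp only [hQ, hRm, hP']; ring
    rw [h2, h]
  have hdegR : ∀ N, (Rm N).degree < P.degree := fun N =>
    hdegP' ▸ Polynomial.degree_modByMonic_lt _ hmonic
  have hsP : 0 < pgNorm P r := pgNorm_pos hr hP
  have hfNcoeff : ∀ N n, (fN N).coeff n = if n ≤ N then f n else 0 := by
    intro N n
    rw [hfN]
    simp only [Polynomial.finset_sum_coeff, Polynomial.coeff_monomial]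
    rw [Finset.sum_ite_eq' (Finset.range (N + 1)) n f]
    simp [Nat.lt_succ_iff]
  have hfN_le : ∀ N, pgNorm (fN N) r ≤ pNorm f r := by
    intro N
    rw [pgNorm_eq]
    refine pNorm_le fun n => ?_
    rw [hfNcoeff]
    split
    · exact le_pNorm hf n
    · simpa using pNorm_nonneg f hr.le
  have hest : ∀ N, pgNorm P r * pgNorm (Q N) r ≤ pgNorm (fN N) r
      ∧ pgNorm (Rm N) r ≤ pgNorm (fN N) r :=
    fun N => div_est hna hr hP hdom (hid N) (hdegR N)
  have hstepA : ∀ N, (Polynomial.monomial (N + 1) (f (N + 1)) : Polynomial F)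
      = P * (Q (N + 1) - Q N) + (Rm (N + 1) - Rm N) := by
    intro N
    have hdiff : fN (N + 1) - fN N = Polynomial.monomial (N + 1) (f (N + 1)) := by
      rw [hfN]; simp [Finset.sum_range_succ]
    rw [← hdiff, hid (N + 1), hid N]; ring
  have hstep : ∀ N, pgNorm P r * pgNorm (Q (N + 1) - Q N) r ≤ ‖f (N + 1)‖ * r ^ (N + 1)
      ∧ pgNorm (Rm (N + 1) - Rm N) r ≤ ‖f (N + 1)‖ * r ^ (N + 1) := by
    intro N
    have hdeg : (Rm (N + 1) - Rm N).degree < P.degree :=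
      lt_of_le_of_lt (Polynomial.degree_sub_le _ _) (max_lt (hdegR _) (hdegR _))
    have h := div_est hna hr hP hdom (hstepA N) hdeg
    rwa [pgNorm_monomial hr] at h
  have hcoefstep : ∀ n N, ‖(Q (N + 1)).coeff n - (Q N).coeff n‖
      ≤ ‖f (N + 1)‖ * r ^ (N + 1) / (pgNorm P r * r ^ n) := by
    intro n N
    have h1 : ‖(Q (N + 1) - Q N).coeff n‖ * r ^ n ≤ pgNorm (Q (N + 1) - Q N) r :=
      by rw [pgNorm_eq]; exact le_pNorm (poly_psOnClosed _) n
    have h3 : ‖(Q (N + 1)).coeff n - (Q N).coeff n‖ = ‖(Q (N + 1) - Q N).coeff n‖ := by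
      rw [Polynomial.coeff_sub]
    rw [h3, le_div_iff₀ (mul_pos hsP (pow_pos hr n))]
    calc ‖(Q (N + 1) - Q N).coeff n‖ * (pgNorm P r * r ^ n)
        = pgNorm P r * (‖(Q (N + 1) - Q N).coeff n‖ * r ^ n) := by ring
      _ ≤ pgNorm P r * pgNorm (Q (N + 1) - Q N) r := mul_le_mul_of_nonneg_left h1 hsP.le
      _ ≤ ‖f (N + 1)‖ * r ^ (N + 1) := (hstep N).1
  have hRcoefstep : ∀ n N, ‖(Rm (N + 1)).coeff n - (Rm N).coeff n‖
      ≤ ‖f (N + 1)‖ * r ^ (N + 1) / r ^ n := by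
    intro n N
    have h1 : ‖(Rm (N + 1) - Rm N).coeff n‖ * r ^ n ≤ pgNorm (Rm (N + 1) - Rm N) r :=
      by rw [pgNorm_eq]; exact le_pNorm (poly_psOnClosed _) n
    have h3 : ‖(Rm (N + 1)).coeff n - (Rm N).coeff n‖ = ‖(Rm (N + 1) - Rm N).coeff n‖ := by
      rw [Polynomial.coeff_sub]
    rw [h3, le_div_iff₀ (pow_pos hr n)]
    exact h1.trans (hstep N).2
  have hfshift : Filter.Tendsto (fun N : ℕ => ‖f (N + 1)‖ * r ^ (N + 1)) Filter.atTop (nhds 0) :=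
    hf.comp (Filter.tendsto_add_atTop_nat 1)
  have hQcauchy : ∀ n, CauchySeq (fun N => (Q N).coeff n) := by
    intro n
    refine nonarch_cauchy hna _ ?_
    have hb : Filter.Tendsto (fun N : ℕ => ‖f (N + 1)‖ * r ^ (N + 1) / (pgNorm P r * r ^ n))
        Filter.atTop (nhds 0) := by
      simpa using hfshift.div_const (pgNorm P r * r ^ n)
    exact squeeze_zero (fun N => norm_nonneg _) (fun N => hcoefstep n N) hb
  have hRcauchy : ∀ n, CauchySeq (fun N => (Rm N).coeff n) := by
    intro n
    refine nonarch_cauchy hna _ ?_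
    have hb : Filter.Tendsto (fun N : ℕ => ‖f (N + 1)‖ * r ^ (N + 1) / r ^ n)
        Filter.atTop (nhds 0) := by
      simpa using hfshift.div_const (r ^ n)
    exact squeeze_zero (fun N => norm_nonneg _) (fun N => hRcoefstep n N) hb
  choose q hq using fun n => cauchySeq_tendsto_of_complete (hQcauchy n)
  choose ρ hρ using fun n => cauchySeq_tendsto_of_complete (hRcauchy n)
  have hρzero : ∀ n, d ≤ n → ρ n = 0 := by
    intro n hn
    refine tendsto_nhds_unique (hρ n) ?_
    have hz : ∀ N, (Rm N).coeff n = 0 := fun N =>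
      Polynomial.coeff_eq_zero_of_degree_lt (lt_of_lt_of_le (hdegR N)
        (by rw [Polynomial.degree_eq_natDegree hP]; exact_mod_cast hn))
    have h0 : (fun N => (Rm N).coeff n) = fun _ => (0 : F) := funext hz
    rw [h0]; exact tendsto_const_nhds
  set R : Polynomial F := ∑ n ∈ Finset.range d, Polynomial.monomial n (ρ n) with hR
  have hRcoeff : ∀ n, R.coeff n = ρ n := by
    intro n
    rw [hR]
    simp only [Polynomial.finset_sum_coeff, Polynomial.coeff_monomial]
    rw [Finset.sum_ite_eq' (Finset.range d) n ρ]
    split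
    · rfl
    · rename_i h
      rw [Finset.mem_range, not_lt] at h
      exact (hρzero n h).symm
  have hdegRlt : R.degree < P.degree := by
    rw [Polynomial.degree_eq_natDegree hP, ← hd]
    rw [Polynomial.degree_lt_iff_coeff_zero]
    intro m hm
    rw [hRcoeff]
    exact hρzero m (by exact_mod_cast hm)
  have hident : ∀ n, f n = (∑ i ∈ Finset.range (n + 1), P.coeff i * q (n - i)) + R.coeff n := by
    intro n
    have h1 : Filter.Tendsto
        (fun N => (∑ i ∈ Finset.range (n + 1), P.coeff i * (Q N).coeff (n - i)) + (Rm N).coeff n)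
        Filter.atTop
        (nhds ((∑ i ∈ Finset.range (n + 1), P.coeff i * q (n - i)) + ρ n)) := by
      refine Filter.Tendsto.add ?_ (hρ n)
      exact tendsto_finset_sum _ fun i _ => (hq (n - i)).const_mul _
    have h2 : (fun N => (∑ i ∈ Finset.range (n + 1), P.coeff i * (Q N).coeff (n - i))
        + (Rm N).coeff n) =ᶠ[Filter.atTop] fun _ => f n := by
      filter_upwards [Filter.eventually_ge_atTop n] with N hN
      have h3 := congrArg (fun p => Polynomial.coeff p n) (hid N)
      simp only [Polynomial.coeff_add] at h3
      rw [hfNcoeff N n, if_pos hN, Polynomial.coeff_mul,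
        Finset.Nat.sum_antidiagonal_eq_sum_range_succ_mk] at h3
      exact h3.symm
    have h4 := tendsto_nhds_unique (Filter.Tendsto.congr' h2 h1) tendsto_const_nhds
    rw [hRcoeff n, ← h4]
  have hqb : ∀ n, ‖q n‖ * r ^ n ≤ pNorm f r / pgNorm P r := by
    intro n
    have hlim : Filter.Tendsto (fun N => ‖(Q N).coeff n‖ * r ^ n) Filter.atTop
        (nhds (‖q n‖ * r ^ n)) := ((hq n).norm).mul_const _
    refine le_of_tendsto hlim (Filter.Eventually.of_forall fun N => ?_)
    have h1 : ‖(Q N).coeff n‖ * r ^ n ≤ pgNorm (Q N) r :=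
      by rw [pgNorm_eq]; exact le_pNorm (poly_psOnClosed _) n
    have h2 : pgNorm (Q N) r ≤ pNorm f r / pgNorm P r := by
      rw [le_div_iff₀ hsP]
      calc pgNorm (Q N) r * pgNorm P r = pgNorm P r * pgNorm (Q N) r := by ring
        _ ≤ pgNorm (fN N) r := (hest N).1
        _ ≤ pNorm f r := hfN_le N
    exact h1.trans h2
  have hRb : pgNorm R r ≤ pNorm f r := by
    rw [pgNorm_eq]
    refine pNorm_le fun n => ?_
    rw [hRcoeff n]
    have hlim : Filter.Tendsto (fun N => ‖(Rm N).coeff n‖ * r ^ n) Filter.atTop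
        (nhds (‖ρ n‖ * r ^ n)) := ((hρ n).norm).mul_const _
    refine le_of_tendsto hlim (Filter.Eventually.of_forall fun N => ?_)
    exact ((by rw [pgNorm_eq]; exact le_pNorm (poly_psOnClosed (Rm N)) n : ‖(Rm N).coeff n‖ * r ^ n ≤ pgNorm (Rm N) r)).trans
      ((hest N).2.trans (hfN_le N))
  have hdegQ : ∀ N, (Q N).degree ≤ (N : WithBot ℕ) := by
    intro N
    have h1 : (fN N /ₘ P').degree ≤ (fN N).degree := Polynomial.degree_divByMonic_le _ _
    have h2 : (fN N).degree ≤ (N : WithBot ℕ) := by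
      refine le_trans (Polynomial.degree_sum_le _ _) ?_
      refine Finset.sup_le fun j hj => ?_
      refine le_trans (Polynomial.degree_monomial_le j _) ?_
      exact_mod_cast Nat.lt_succ_iff.mp (Finset.mem_range.mp hj)
    calc (Q N).degree ≤ (fN N /ₘ P').degree + (Polynomial.C P.leadingCoeff⁻¹).degree :=
          Polynomial.degree_mul_le _ _
      _ ≤ (N : WithBot ℕ) + 0 := add_le_add (h1.trans h2) Polynomial.degree_C_le
      _ = (N : WithBot ℕ) := add_zero _
  have hqtail : ∀ ε : ℝ, 0 < ε → ∃ N₁ : ℕ, ∀ n, N₁ < n → ‖q n‖ * r ^ n ≤ ε / 2 := by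
    intro ε hε
    obtain ⟨N₁, hN₁⟩ := (Metric.tendsto_atTop.mp hf) (ε / 2 * pgNorm P r)
      (mul_pos (by linarith) hsP)
    refine ⟨N₁, fun n hn => ?_⟩
    have hstepb : ∀ j, N₁ ≤ j → ‖(Q (j + 1)).coeff n - (Q j).coeff n‖ ≤ ε / 2 / r ^ n := by
      intro j hj
      refine (hcoefstep n j).trans ?_
      have hfj : ‖f (j + 1)‖ * r ^ (j + 1) ≤ ε / 2 * pgNorm P r := by
        have h5 := hN₁ (j + 1) (by omega)
        rw [Real.dist_eq, sub_zero, abs_of_nonneg (by positivity)] at h5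
        linarith
      rw [div_le_div_iff₀ (mul_pos hsP (pow_pos hr n)) (pow_pos hr n)]
      calc ‖f (j + 1)‖ * r ^ (j + 1) * r ^ n ≤ (ε / 2 * pgNorm P r) * r ^ n :=
            mul_le_mul_of_nonneg_right hfj (pow_pos hr n).le
        _ = ε / 2 * (pgNorm P r * r ^ n) := by ring
    have htel : ∀ m, N₁ ≤ m → ‖(Q m).coeff n - (Q N₁).coeff n‖ ≤ ε / 2 / r ^ n :=
      nonarch_telescope hna (fun N => (Q N).coeff n)
        (div_nonneg (by linarith) (pow_pos hr n).le) N₁ hstepb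
    have hlim : Filter.Tendsto (fun m => ‖(Q m).coeff n - (Q N₁).coeff n‖) Filter.atTop
        (nhds ‖q n - (Q N₁).coeff n‖) := ((hq n).sub tendsto_const_nhds).norm
    have hqn : ‖q n - (Q N₁).coeff n‖ ≤ ε / 2 / r ^ n :=
      le_of_tendsto hlim (Filter.eventually_atTop.mpr ⟨N₁, htel⟩)
    have hQz : (Q N₁).coeff n = 0 :=
      Polynomial.coeff_eq_zero_of_degree_lt (lt_of_le_of_lt (hdegQ N₁) (by exact_mod_cast hn))
    rw [hQz, sub_zero] at hqn
    calc ‖q n‖ * r ^ n ≤ (ε / 2 / r ^ n) * r ^ n :=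
          mul_le_mul_of_nonneg_right hqn (pow_pos hr n).le
      _ = ε / 2 := div_mul_cancel₀ _ (pow_pos hr n).ne'
  have hqps : PSOnClosed q r := by
    show Filter.Tendsto (fun n : ℕ => ‖q n‖ * r ^ n) Filter.atTop (nhds 0)
    rw [Metric.tendsto_atTop]
    intro ε hε
    obtain ⟨N₁, hN₁⟩ := hqtail ε hε
    refine ⟨N₁ + 1, fun n hn => ?_⟩
    rw [Real.dist_eq, sub_zero, abs_of_nonneg (by positivity)]
    exact lt_of_le_of_lt (hN₁ n (by omega)) (by linarith)
  refine ⟨⟨q, R⟩, ⟨hqps, hident, hdegRlt, hRb, pNorm_le hqb⟩, ?_⟩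
  intro y hy
  exact division_unique hna hr hP hdom y ⟨q, R⟩ hy.1 hy.2.1 hy.2.2.1 hqps hident hdegRlt
end

section
/- (Non-Archimedean Little Picard Theorem.) Let f be an entire function on F such that f(z) ≠ 0 for every z ∈ F. Then f is constant. -/
open Filter Topology

variable {F : Type*} [NontriviallyNormedField F]

namespace NAPicard
open Polynomial
variable {F : Type*} [NontriviallyNormedField F]

noncomputable def gnorm (P : Polynomial F) (r : ℝ) : ℝ :=
  (Finset.range (P.natDegree + 1)).sup'
    (Finset.nonempty_range_iff.mpr (Nat.succ_ne_zero _)) (fun n => ‖P.coeff n‖ * r ^ n)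

lemma le_gnorm (P : Polynomial F) {r : ℝ} (hr : 0 ≤ r) (n : ℕ) :
    ‖P.coeff n‖ * r ^ n ≤ gnorm P r := by
  rcases le_or_gt n P.natDegree with h | h
  · exact Finset.le_sup' (fun n => ‖P.coeff n‖ * r ^ n) (Finset.mem_range.mpr (Nat.lt_succ_of_le h))
  · have : P.coeff n = 0 := P.coeff_eq_zero_of_natDegree_lt h
    rw [this, norm_zero, zero_mul]
    refine le_trans ?_ (Finset.le_sup' (fun n => ‖P.coeff n‖ * r ^ n)
      (Finset.mem_range.mpr (Nat.succ_pos _)))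
    positivity

lemma gnorm_nonneg (P : Polynomial F) {r : ℝ} (hr : 0 ≤ r) : 0 ≤ gnorm P r :=
  le_trans (by positivity) (le_gnorm P hr 0)

lemma gnorm_le (P : Polynomial F) {r C : ℝ} (h : ∀ n, ‖P.coeff n‖ * r ^ n ≤ C) :
    gnorm P r ≤ C :=
  Finset.sup'_le _ _ fun n _ => h n

lemma gnorm_pos (P : Polynomial F) (hP : P ≠ 0) {r : ℝ} (hr : 0 < r) : 0 < gnorm P r := by
  refine lt_of_lt_of_le ?_ (le_gnorm P hr.le P.natDegree)
  have h : P.coeff P.natDegree ≠ 0 := Polynomial.leadingCoeff_ne_zero.mpr hP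
  exact mul_pos (norm_pos_iff.mpr h) (pow_pos hr _)

variable [IsUltrametricDist F]

lemma norm_sub_le_max' (x y : F) : ‖x - y‖ ≤ max ‖x‖ ‖y‖ := by
  rw [sub_eq_add_neg]
  simpa using IsUltrametricDist.norm_add_le_max x (-y)

lemma norm_sub_eq_left {x y : F} (h : ‖y‖ < ‖x‖) : ‖x - y‖ = ‖x‖ := by
  rw [sub_eq_add_neg]
  rw [IsUltrametricDist.norm_add_eq_max_of_norm_ne_norm (by rw [norm_neg]; exact (ne_of_lt h).symm)]
  rw [norm_neg]
  exact max_eq_left h.le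

/-- In-ball roots (with multiplicity) of a polynomial. -/
noncomputable def broots (P : Polynomial F) (r : ℝ) : Multiset F :=
  P.roots.filter (fun u => ‖u‖ ≤ r)

theorem poly_main [IsAlgClosed F] {r : ℝ} (hr : 0 < r) :
    ∀ (P : Polynomial F), P ≠ 0 →
    (‖P.coeff (Multiset.card (broots P r))‖ * r ^ (Multiset.card (broots P r)) = gnorm P r) ∧
    (∀ n, Multiset.card (broots P r) < n → ‖P.coeff n‖ * r ^ n < gnorm P r) ∧
    (∀ z : F, ‖z‖ ≤ r →
      gnorm P r * ((broots P r).map (fun u => ‖z - u‖)).prod ≤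
        ‖P.eval z‖ * r ^ (Multiset.card (broots P r))) := by
  suffices H : ∀ d : ℕ, ∀ P : Polynomial F, P ≠ 0 → P.natDegree ≤ d →
      (‖P.coeff (Multiset.card (broots P r))‖ * r ^ (Multiset.card (broots P r)) = gnorm P r) ∧
      (∀ n, Multiset.card (broots P r) < n → ‖P.coeff n‖ * r ^ n < gnorm P r) ∧
      (∀ z : F, ‖z‖ ≤ r →
        gnorm P r * ((broots P r).map (fun u => ‖z - u‖)).prod ≤
          ‖P.eval z‖ * r ^ (Multiset.card (broots P r))) by
    exact fun P hP => H P.natDegree P hP le_rfl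
  intro d
  induction d with
  | zero =>
    intro P hP hdeg
    have hd0 : P.natDegree = 0 := Nat.le_zero.mp hdeg
    have hc : P.coeff 0 ≠ 0 := by
      intro h
      exact hP (by rw [Polynomial.eq_C_of_natDegree_eq_zero hd0, h, map_zero])
    have hroots : P.roots = 0 := by
      rw [Polynomial.eq_C_of_natDegree_eq_zero hd0]
      exact Polynomial.roots_C _
    have hb : broots P r = 0 := by rw [broots, hroots]; rfl
    have hg : gnorm P r = ‖P.coeff 0‖ := by
      rw [gnorm]
      rw [Finset.sup'_congr _ (by rw [hd0]) (fun n _ => rfl)]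
      simp [Finset.range_one]
    refine ⟨?_, ?_, ?_⟩
    · rw [hb]; simpa using hg.symm
    · intro n hn
      rw [hb] at hn
      simp only [Multiset.card_zero] at hn
      rw [P.coeff_eq_zero_of_natDegree_lt (by omega), norm_zero, zero_mul, hg]
      exact norm_pos_iff.mpr hc
    · intro z hz
      rw [hb]
      simp only [Multiset.map_zero, Multiset.prod_zero, Multiset.card_zero, pow_zero, mul_one]
      rw [hg]
      rw [Polynomial.eq_C_of_natDegree_eq_zero hd0, Polynomial.eval_C]
      simp [Polynomial.coeff_C]
  | succ d IH =>
    intro P hP hdeg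
    rcases le_or_gt P.natDegree d with hle | hlt
    · exact IH P hP hle
    have hdP : P.natDegree = d + 1 := by omega
    have hdegnz : P.degree ≠ 0 := by
      rw [Polynomial.degree_eq_natDegree hP, hdP]
      exact_mod_cast Nat.succ_ne_zero d
    obtain ⟨w, hw⟩ := IsAlgClosed.exists_root P hdegnz
    obtain ⟨Q, hQ⟩ := (Polynomial.dvd_iff_isRoot.mpr hw)
    have hPQ : P = Q * (X - C w) := by rw [hQ, mul_comm]
    have hQ0 : Q ≠ 0 := by rintro rfl; exact hP (by simp [hPQ])
    have hXC : (X - C w : Polynomial F) ≠ 0 := Polynomial.X_sub_C_ne_zero w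
    have hdegQ : Q.natDegree ≤ d := by
      have := Polynomial.natDegree_mul hQ0 hXC
      rw [← hPQ, Polynomial.natDegree_X_sub_C, hdP] at this
      omega
    obtain ⟨ih1, ih2, ih3⟩ := IH Q hQ0 hdegQ
    set gQ := gnorm Q r with hgQ
    set BQ := Multiset.card (broots Q r) with hBQ
    have gQpos : 0 < gQ := gnorm_pos Q hQ0 hr
    have hrootsP : P.roots = Q.roots + {w} := by
      rw [hPQ, Polynomial.roots_mul (hPQ ▸ hP), Polynomial.roots_X_sub_C]
    have hbP : broots P r = broots Q r + Multiset.filter (fun u => ‖u‖ ≤ r) {w} := by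
      rw [broots, hrootsP, Multiset.filter_add]; rfl
    have hc0 : P.coeff 0 = Q.coeff 0 * (-w) := by
      rw [hPQ, Polynomial.mul_coeff_zero]
      congr 1
      simp
    have hcS : ∀ m : ℕ, P.coeff (m + 1) = Q.coeff m - w * Q.coeff (m + 1) := by
      intro m
      rw [hPQ, Polynomial.coeff_mul_X_sub_C, mul_comm (Q.coeff (m+1)) w]
    have hupper : ∀ n, ‖P.coeff n‖ * r ^ n ≤ max r ‖w‖ * gQ := by
      intro n
      cases n with
      | zero =>
        rw [hc0, norm_mul, norm_neg, pow_zero, mul_one]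
        have h1 : ‖Q.coeff 0‖ ≤ gQ := by simpa using le_gnorm Q hr.le 0
        have h2 : ‖w‖ ≤ max r ‖w‖ := le_max_right _ _
        calc ‖Q.coeff 0‖ * ‖w‖ ≤ gQ * ‖w‖ := by
              exact mul_le_mul_of_nonneg_right h1 (norm_nonneg w)
          _ ≤ gQ * max r ‖w‖ := by exact mul_le_mul_of_nonneg_left h2 gQpos.le
          _ = max r ‖w‖ * gQ := mul_comm _ _
      | succ m =>
        rw [hcS m]
        have hbound := norm_sub_le_max' (Q.coeff m) (w * Q.coeff (m + 1))
        have hrp : (0:ℝ) < r ^ (m+1) := pow_pos hr _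
        calc ‖Q.coeff m - w * Q.coeff (m+1)‖ * r ^ (m+1)
            ≤ max ‖Q.coeff m‖ ‖w * Q.coeff (m+1)‖ * r ^ (m+1) := by
              exact mul_le_mul_of_nonneg_right hbound hrp.le
          _ = max (‖Q.coeff m‖ * r ^ (m+1)) (‖w * Q.coeff (m+1)‖ * r ^ (m+1)) := by
              rw [max_mul_of_nonneg _ _ hrp.le]
          _ ≤ max r ‖w‖ * gQ := by
              apply max_le
              · have : ‖Q.coeff m‖ * r ^ (m+1) = r * (‖Q.coeff m‖ * r ^ m) := by ring
                rw [this]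
                calc r * (‖Q.coeff m‖ * r ^ m) ≤ r * gQ :=
                      mul_le_mul_of_nonneg_left (le_gnorm Q hr.le m) hr.le
                  _ ≤ max r ‖w‖ * gQ :=
                      mul_le_mul_of_nonneg_right (le_max_left _ _) gQpos.le
              · rw [norm_mul, mul_assoc]
                calc ‖w‖ * (‖Q.coeff (m+1)‖ * r ^ (m+1)) ≤ ‖w‖ * gQ :=
                      mul_le_mul_of_nonneg_left (le_gnorm Q hr.le (m+1)) (norm_nonneg w)
                  _ ≤ max r ‖w‖ * gQ :=
                      mul_le_mul_of_nonneg_right (le_max_right _ _) gQpos.le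
    rcases le_or_gt ‖w‖ r with hwr | hwr
    · -- Case A : the new root is in the ball
      have hmax : max r ‖w‖ = r := max_eq_left hwr
      rw [hmax] at hupper
      have hfil : Multiset.filter (fun u => ‖u‖ ≤ r) ({w} : Multiset F) = {w} := by
        rw [Multiset.filter_singleton, if_pos hwr]
      have hbP' : broots P r = broots Q r + {w} := by rw [hbP, hfil]
      have hcard : Multiset.card (broots P r) = BQ + 1 := by
        rw [hbP']; simp [hBQ]
      -- the key coefficient equality
      have hylt : ‖w * Q.coeff (BQ + 1)‖ < ‖Q.coeff BQ‖ := by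
        have h1 : ‖w * Q.coeff (BQ+1)‖ * r ^ (BQ+1) < r * gQ := by
          rw [norm_mul, mul_assoc]
          calc ‖w‖ * (‖Q.coeff (BQ+1)‖ * r ^ (BQ+1)) ≤ r * (‖Q.coeff (BQ+1)‖ * r ^ (BQ+1)) :=
                mul_le_mul_of_nonneg_right hwr (by positivity)
            _ < r * gQ := mul_lt_mul_of_pos_left (ih2 (BQ+1) (by omega)) hr
        have h2 : ‖Q.coeff BQ‖ * r ^ (BQ+1) = r * gQ := by
          rw [pow_succ, ← mul_assoc, ih1]; ring
        have := h1.trans_eq h2.symm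
        exact lt_of_mul_lt_mul_right this (by positivity)
      have hkey : ‖P.coeff (BQ + 1)‖ * r ^ (BQ+1) = r * gQ := by
        rw [hcS BQ, norm_sub_eq_left hylt, pow_succ, ← mul_assoc, ih1]; ring
      have hgP : gnorm P r = r * gQ := by
        refine le_antisymm (gnorm_le P hupper) ?_
        rw [← hkey]; exact le_gnorm P hr.le _
      refine ⟨?_, ?_, ?_⟩
      · rw [hcard, hgP, hkey]
      · intro n hn
        rw [hcard] at hn
        obtain ⟨m, rfl⟩ : ∃ m, n = m + 1 := ⟨n - 1, by omega⟩
        have hm : BQ < m := by omega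
        rw [hgP, hcS m]
        calc ‖Q.coeff m - w * Q.coeff (m+1)‖ * r ^ (m+1)
            ≤ max (‖Q.coeff m‖ * r ^ (m+1)) (‖w * Q.coeff (m+1)‖ * r ^ (m+1)) := by
              rw [← max_mul_of_nonneg _ _ (by positivity : (0:ℝ) ≤ r ^ (m+1))]
              exact mul_le_mul_of_nonneg_right (norm_sub_le_max' _ _) (by positivity)
          _ < r * gQ := by
              apply max_lt
              · have : ‖Q.coeff m‖ * r ^ (m+1) = r * (‖Q.coeff m‖ * r ^ m) := by ring
                rw [this]
                exact mul_lt_mul_of_pos_left (ih2 m hm) hr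
              · rw [norm_mul, mul_assoc]
                calc ‖w‖ * (‖Q.coeff (m+1)‖ * r ^ (m+1)) ≤ r * (‖Q.coeff (m+1)‖ * r ^ (m+1)) :=
                      mul_le_mul_of_nonneg_right hwr (by positivity)
                  _ < r * gQ := mul_lt_mul_of_pos_left (ih2 (m+1) (by omega)) hr
      · intro z hz
        rw [hbP', hgP, Multiset.map_add, Multiset.prod_add]
        simp only [Multiset.card_add, Multiset.card_singleton, ← hBQ]
        simp only [Multiset.map_singleton, Multiset.prod_singleton]
        have heval : ‖P.eval z‖ = ‖Q.eval z‖ * ‖z - w‖ := by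
          rw [hPQ, Polynomial.eval_mul, norm_mul]
          congr 2
          simp
        rw [heval]
        have h3 := ih3 z hz
        have hzw : (0:ℝ) ≤ ‖z - w‖ := norm_nonneg _
        calc r * gQ * (((broots Q r).map fun u => ‖z - u‖).prod * ‖z - w‖)
            = (r * ‖z - w‖) * (gQ * ((broots Q r).map fun u => ‖z - u‖).prod) := by ring
          _ ≤ (r * ‖z - w‖) * (‖Q.eval z‖ * r ^ BQ) :=
              mul_le_mul_of_nonneg_left h3 (by positivity)
          _ = ‖Q.eval z‖ * ‖z - w‖ * r ^ (BQ + 1) := by ring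
    · -- Case B : the new root is outside the ball
      have hmax : max r ‖w‖ = ‖w‖ := max_eq_right hwr.le
      rw [hmax] at hupper
      have hwpos : (0:ℝ) < ‖w‖ := lt_trans hr hwr
      have hfil : Multiset.filter (fun u => ‖u‖ ≤ r) ({w} : Multiset F) = 0 := by
        rw [Multiset.filter_singleton, if_neg (not_le.mpr hwr)]
        rfl
      have hbP' : broots P r = broots Q r := by rw [hbP, hfil, add_zero]
      have hcard : Multiset.card (broots P r) = BQ := by rw [hbP']
      have hkey : ‖P.coeff BQ‖ * r ^ BQ = ‖w‖ * gQ := by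
        cases hBQv : BQ with
        | zero =>
          have ih1' := ih1
          rw [hBQv] at ih1'
          simp only [pow_zero, mul_one] at ih1' ⊢
          rw [hc0, norm_mul, norm_neg, ih1', mul_comm]
        | succ m =>
          have h2 : ‖w * Q.coeff (m+1)‖ * r ^ (m+1) = ‖w‖ * gQ := by
            rw [norm_mul, mul_assoc]
            congr 1
            have ih1' := ih1
            rw [hBQv] at ih1'
            exact ih1'
          have h1 : ‖Q.coeff m‖ * r ^ (m+1) < ‖w‖ * gQ := by
            calc ‖Q.coeff m‖ * r ^ (m+1) = r * (‖Q.coeff m‖ * r ^ m) := by ring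
              _ ≤ r * gQ := mul_le_mul_of_nonneg_left (le_gnorm Q hr.le m) hr.le
              _ < ‖w‖ * gQ := mul_lt_mul_of_pos_right hwr gQpos
          have hqm : ‖Q.coeff m‖ < ‖w * Q.coeff (m+1)‖ := by
            have := h1.trans_eq h2.symm
            exact lt_of_mul_lt_mul_right this (by positivity)
          rw [hcS m, norm_sub_rev, norm_sub_eq_left hqm]
          exact h2
      have hgP : gnorm P r = ‖w‖ * gQ := by
        refine le_antisymm (gnorm_le P hupper) ?_
        rw [← hkey]; exact le_gnorm P hr.le _
      refine ⟨?_, ?_, ?_⟩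
      · rw [hcard, hgP, hkey]
      · intro n hn
        rw [hcard] at hn
        obtain ⟨m, rfl⟩ : ∃ m, n = m + 1 := ⟨n - 1, by omega⟩
        rw [hgP, hcS m]
        calc ‖Q.coeff m - w * Q.coeff (m+1)‖ * r ^ (m+1)
            ≤ max (‖Q.coeff m‖ * r ^ (m+1)) (‖w * Q.coeff (m+1)‖ * r ^ (m+1)) := by
              rw [← max_mul_of_nonneg _ _ (by positivity : (0:ℝ) ≤ r ^ (m+1))]
              exact mul_le_mul_of_nonneg_right (norm_sub_le_max' _ _) (by positivity)
          _ < ‖w‖ * gQ := by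
              apply max_lt
              · calc ‖Q.coeff m‖ * r ^ (m+1) = r * (‖Q.coeff m‖ * r ^ m) := by ring
                  _ ≤ r * gQ := mul_le_mul_of_nonneg_left (le_gnorm Q hr.le m) hr.le
                  _ < ‖w‖ * gQ := mul_lt_mul_of_pos_right hwr gQpos
              · rw [norm_mul, mul_assoc]
                exact mul_lt_mul_of_pos_left (ih2 (m+1) (by omega)) hwpos
      · intro z hz
        rw [hbP', hgP]
        simp only [← hBQ]
        have hzw : ‖z - w‖ = ‖w‖ := by
          rw [norm_sub_rev]
          exact norm_sub_eq_left (lt_of_le_of_lt hz hwr)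
        have heval : ‖P.eval z‖ = ‖Q.eval z‖ * ‖w‖ := by
          rw [hPQ, Polynomial.eval_mul, norm_mul]
          congr 1
          rw [← hzw]
          congr 1
          simp
        rw [heval]
        have h3 := ih3 z hz
        calc ‖w‖ * gQ * ((Multiset.map (fun u => ‖z - u‖) (broots Q r)).prod)
            = ‖w‖ * (gQ * (Multiset.map (fun u => ‖z - u‖) (broots Q r)).prod) := by ring
          _ ≤ ‖w‖ * (‖Q.eval z‖ * r ^ BQ) := mul_le_mul_of_nonneg_left h3 hwpos.le
          _ = ‖Q.eval z‖ * ‖w‖ * r ^ BQ := by ring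


lemma prod_lt_of_forall_lt {c : ℝ} (hc : 0 ≤ c) :
    ∀ (s : Multiset ℝ), s ≠ 0 → (∀ x ∈ s, c < x) → c ^ Multiset.card s < s.prod := by
  intro s
  induction s using Multiset.induction_on with
  | empty => intro h; exact absurd rfl h
  | cons x t IH =>
    intro _ h
    have hx : c < x := h x (Multiset.mem_cons_self x t)
    rcases eq_or_ne t 0 with rfl | ht
    · simpa using hx
    · have ht' := IH ht (fun y hy => h y (Multiset.mem_cons_of_mem hy))
      have htpos : 0 < t.prod := lt_of_le_of_lt (by positivity) ht'
      rw [Multiset.card_cons, Multiset.prod_cons, pow_succ, mul_comm (c ^ Multiset.card t) c]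
      calc c * c ^ Multiset.card t ≤ c * t.prod := mul_le_mul_of_nonneg_left ht'.le hc
        _ < x * t.prod := mul_lt_mul_of_pos_right hx htpos

lemma exists_seq {α : Type*} (Q : ℕ → α → Prop) (D : ℕ → α → α → Prop) (z0 : α)
    (h0 : Q 0 z0) (hstep : ∀ j z, Q j z → ∃ z', Q (j+1) z' ∧ D j z z') :
    ∃ w : ℕ → α, (∀ j, Q j (w j)) ∧ ∀ j, D j (w j) (w (j+1)) := by
  choose g hg1 hg2 using hstep
  let W : ∀ j : ℕ, {z : α // Q j z} :=
    fun j => Nat.rec ⟨z0, h0⟩ (fun j p => ⟨g j p.1 p.2, hg1 j p.1 p.2⟩) j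
  exact ⟨fun j => (W j).1, fun j => (W j).2, fun j => hg2 j (W j).1 (W j).2⟩




theorem exists_zero {F : Type*} [NontriviallyNormedField F] [CompleteSpace F] [IsAlgClosed F]
    [IsUltrametricDist F] (a : ℕ → F) (ha : Entire a) {m : ℕ} (hm : m ≠ 0) (ham : a m ≠ 0) :
    ∃ z : F, psEval a z = 0 := by
  classical
  -- choice of the radius
  set r : ℝ := max 1 ((‖a 0‖ + 1) / ‖a m‖) with hrdef
  have hr1 : (1:ℝ) ≤ r := le_max_left _ _
  have hr : (0:ℝ) < r := lt_of_lt_of_le one_pos hr1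
  have hampos : (0:ℝ) < ‖a m‖ := norm_pos_iff.mpr ham
  have hram : ‖a 0‖ < ‖a m‖ * r ^ m := by
    have h1 : (‖a 0‖ + 1) / ‖a m‖ ≤ r := le_max_right _ _
    have h2 : ‖a 0‖ + 1 ≤ ‖a m‖ * r := by
      rw [div_le_iff₀ hampos] at h1
      linarith [h1]
    have h3 : r ≤ r ^ m := by
      calc r = r ^ 1 := (pow_one r).symm
        _ ≤ r ^ m := pow_le_pow_right₀ hr1 (by omega)
    nlinarith [hampos]
  set t : ℕ → ℝ := fun n => ‖a n‖ * r ^ n with htdef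
  have ht0 : Filter.Tendsto t Filter.atTop (nhds 0) := ha r hr
  have htnn : ∀ n, 0 ≤ t n := fun n => by positivity
  have htm : 0 < t m := mul_pos hampos (pow_pos hr m)
  have ht0m : t 0 < t m := by
    simp only [htdef, pow_zero, mul_one]
    exact lt_of_lt_of_le hram (le_of_eq rfl)
  -- the largest index attaining the sup of t
  obtain ⟨N', hN'⟩ : ∃ N', ∀ n, N' ≤ n → t n < t m := by
    have := ht0.eventually (gt_mem_nhds htm)
    exact Filter.eventually_atTop.mp this
  set s : Finset ℕ := Finset.range (max N' m + 1) with hsdef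
  have hs : s.Nonempty := Finset.nonempty_range_iff.mpr (Nat.succ_ne_zero _)
  have hms : m ∈ s := Finset.mem_range.mpr (by omega)
  set M : ℝ := s.sup' hs t with hMdef
  have htmM : t m ≤ M := Finset.le_sup' t hms
  have hMle : ∀ n, t n ≤ M := by
    intro n
    by_cases hn : n ∈ s
    · exact Finset.le_sup' t hn
    · have : N' ≤ n := by
        simp only [hsdef, Finset.mem_range] at hn
        omega
      exact le_trans (hN' n this).le htmM
  have hM0 : 0 < M := lt_of_lt_of_le htm htmM
  have hMa0 : t 0 < M := lt_of_lt_of_le ht0m htmM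
  obtain ⟨K0, hK0s, hK0⟩ := Finset.exists_mem_eq_sup' hs t
  have hfilne : (s.filter (fun n => t n = M)).Nonempty :=
    ⟨K0, Finset.mem_filter.mpr ⟨hK0s, hK0.symm⟩⟩
  set K : ℕ := (s.filter (fun n => t n = M)).max' hfilne with hKdef
  have hKmem := (s.filter (fun n => t n = M)).max'_mem hfilne
  rw [Finset.mem_filter] at hKmem
  have htK : t K = M := hKmem.2
  have hKlt : ∀ n, K < n → t n < M := by
    intro n hn
    by_cases hns : n ∈ s
    · refine lt_of_le_of_ne (hMle n) ?_
      intro he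
      have : n ∈ s.filter (fun n => t n = M) := Finset.mem_filter.mpr ⟨hns, he⟩
      have := Finset.le_max' _ n this
      omega
    · have : N' ≤ n := by
        simp only [hsdef, Finset.mem_range] at hns
        omega
      exact lt_of_lt_of_le (hN' n this) htmM
  have hK0' : K ≠ 0 := by
    intro h
    rw [h] at htK
    exact absurd htK (ne_of_lt hMa0)
  have haK : a K ≠ 0 := by
    intro h
    rw [htdef] at htK
    simp only [h, norm_zero, zero_mul] at htK
    exact absurd htK.symm (ne_of_gt hM0)
  -- truncated polynomials
  set P : ℕ → Polynomial F :=
    fun N => ∑ i ∈ Finset.range (N+1), Polynomial.C (a i) * Polynomial.X ^ i with hPdef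
  have hPcoeff : ∀ N n, (P N).coeff n = if n ≤ N then a n else 0 := by
    intro N n
    rw [hPdef]
    rw [Polynomial.finset_sum_coeff]
    simp only [Polynomial.coeff_C_mul, Polynomial.coeff_X_pow]
    rw [Finset.sum_congr rfl (fun i _ => by rw [mul_ite, mul_one, mul_zero])]
    rw [Finset.sum_ite_eq (Finset.range (N+1)) n a]
    simp [Nat.lt_succ_iff]
  have hPeval : ∀ N (z : F), (P N).eval z = ∑ i ∈ Finset.range (N+1), a i * z ^ i := by
    intro N z
    rw [hPdef, Polynomial.eval_finset_sum]
    simp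
  have hPne : ∀ N, K ≤ N → P N ≠ 0 := by
    intro N hN h
    have := hPcoeff N K
    rw [h, if_pos hN] at this
    exact haK (by simpa using this.symm)
  have hPdeg : ∀ N, (P N).natDegree ≤ N := by
    intro N
    rw [Polynomial.natDegree_le_iff_coeff_eq_zero]
    intro n hn
    rw [hPcoeff, if_neg (by omega)]
  have hgPM : ∀ N, K ≤ N → gnorm (P N) r = M := by
    intro N hN
    refine le_antisymm (gnorm_le _ ?_) ?_
    · intro n
      rw [hPcoeff]
      by_cases h : n ≤ N
      · rw [if_pos h]; exact hMle n
      · rw [if_neg h, norm_zero, zero_mul]; exact hM0.le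
    · have := le_gnorm (P N) hr.le K
      rw [hPcoeff, if_pos hN] at this
      exact le_trans (le_of_eq htK.symm) this
  -- summability and tails
  have hsummand : ∀ (z : F), ‖z‖ ≤ r → ∀ n, ‖a n * z ^ n‖ ≤ t n := by
    intro z hz n
    rw [norm_mul, norm_pow]
    exact mul_le_mul_of_nonneg_left (pow_le_pow_left₀ (norm_nonneg z) hz n) (norm_nonneg _)
  have hsum : ∀ (z : F), ‖z‖ ≤ r → Summable (fun n => a n * z ^ n) := by
    intro z hz
    apply NonarchimedeanAddGroup.summable_of_tendsto_cofinite_zero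
    rw [Nat.cofinite_eq_atTop]
    exact squeeze_zero_norm (hsummand z hz) ht0
  set eps : ℕ → ℝ := fun N => ⨆ j : ℕ, t (N + 1 + j) with hepsdef
  have hbdd : ∀ N, BddAbove (Set.range fun j => t (N+1+j)) := by
    intro N
    exact ⟨M, by rintro x ⟨j, rfl⟩; exact hMle _⟩
  have heps_ge : ∀ N n, N < n → t n ≤ eps N := by
    intro N n h
    have hn : n = N + 1 + (n - N - 1) := by omega
    rw [hn]
    exact le_ciSup (hbdd N) _
  have heps_nonneg : ∀ N, 0 ≤ eps N :=
    fun N => le_trans (htnn (N+1)) (heps_ge N (N+1) (by omega))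
  have heps_leM : ∀ N, eps N ≤ M := fun N => ciSup_le (fun j => hMle _)
  have heps_anti : ∀ N N', N ≤ N' → eps N' ≤ eps N :=
    fun N N' h => ciSup_le (fun j => heps_ge N (N' + 1 + j) (by omega))
  have heps_to0 : Filter.Tendsto eps Filter.atTop (nhds 0) := by
    rw [Metric.tendsto_atTop]
    intro η hη
    obtain ⟨N₀, hN₀⟩ := Filter.eventually_atTop.mp (ht0.eventually (gt_mem_nhds (by linarith : (0:ℝ) < η/2)))
    refine ⟨N₀, fun N hN => ?_⟩
    rw [Real.dist_eq, sub_zero, abs_of_nonneg (heps_nonneg N)]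
    have : eps N ≤ η / 2 := ciSup_le (fun j => (hN₀ _ (by omega)).le)
    linarith
  have htail : ∀ (z : F), ‖z‖ ≤ r → ∀ N, ‖psEval a z - (P N).eval z‖ ≤ eps N := by
    intro z hz N
    have hsplit := Summable.sum_add_tsum_nat_add (N+1) (hsum z hz)
    have : psEval a z - (P N).eval z = ∑' i, a (i + (N+1)) * z ^ (i + (N+1)) := by
      rw [psEval, hPeval, ← hsplit]
      ring
    rw [this]
    refine IsUltrametricDist.norm_tsum_le_of_forall_le_of_nonneg (heps_nonneg N) (fun i => ?_)
    exact le_trans (hsummand z hz _) (heps_ge N (i + (N+1)) (by omega))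
  -- root counting for the truncations
  have hBbounds : ∀ N, K ≤ N →
      1 ≤ Multiset.card (broots (P N) r) ∧ Multiset.card (broots (P N) r) ≤ K := by
    intro N hN
    obtain ⟨p1, p2, p3⟩ := poly_main hr (P N) (hPne N hN)
    set B := Multiset.card (broots (P N) r) with hBdef
    have hBN : B ≤ N := by
      calc B ≤ Multiset.card (P N).roots := Multiset.card_le_card (Multiset.filter_le _ _)
        _ ≤ (P N).natDegree := Polynomial.card_roots' _
        _ ≤ N := hPdeg N
    constructor
    · by_contra h
      have hB0 : B = 0 := by omega
      rw [hB0] at p1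
      rw [hPcoeff, if_pos (by omega), hgPM N hN] at p1
      simp only [pow_zero, mul_one] at p1
      have : t 0 = M := by simpa [htdef] using p1
      exact absurd this (ne_of_lt hMa0)
    · by_contra h
      push_neg at h
      have := p1
      rw [hPcoeff, if_pos hBN, hgPM N hN] at this
      have : t B = M := this
      exact absurd (hKlt B h) (by rw [this]; exact lt_irrefl M)
  have hroot : ∀ N, K ≤ N → ∃ z : F, ‖z‖ ≤ r ∧ (P N).eval z = 0 := by
    intro N hN
    obtain ⟨h1, _⟩ := hBbounds N hN
    obtain ⟨u, hu⟩ := Multiset.card_pos_iff_exists_mem.mp (lt_of_lt_of_le zero_lt_one h1)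
    simp only [broots, Multiset.mem_filter] at hu
    exact ⟨u, hu.2, (Polynomial.mem_roots (hPne N hN)).mp hu.1⟩
  -- main case split
  by_cases heZ : ∃ N, K ≤ N ∧ eps N = 0
  · obtain ⟨N, hKN, hez⟩ := heZ
    obtain ⟨z, hzr, hzz⟩ := hroot N hKN
    refine ⟨z, ?_⟩
    have := htail z hzr N
    rw [hzz, sub_zero, hez] at this
    exact norm_le_zero_iff.mp this
  · push_neg at heZ
    have heps_pos : ∀ N, K ≤ N → 0 < eps N :=
      fun N hN => lt_of_le_of_ne (heps_nonneg N) (Ne.symm (heZ N hN))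
    set δ : ℕ → ℝ := fun N => r * (eps N / M) ^ ((1:ℝ)/(K:ℝ)) with hδdef
    have hKpos : (0:ℝ) < (K:ℝ) := by
      have : 0 < K := by omega
      exact_mod_cast this
    have hδnn : ∀ N, 0 ≤ δ N := by
      intro N
      apply mul_nonneg hr.le
      exact Real.rpow_nonneg (div_nonneg (heps_nonneg N) hM0.le) _
    have hδanti : ∀ N N', N ≤ N' → δ N' ≤ δ N := by
      intro N N' h
      apply mul_le_mul_of_nonneg_left _ hr.le
      exact Real.rpow_le_rpow (div_nonneg (heps_nonneg N') hM0.le)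
        (by gcongr; exact heps_anti N N' h) (by positivity)
    have hδ0 : Filter.Tendsto δ Filter.atTop (nhds 0) := by
      have h1 : Filter.Tendsto (fun N => eps N / M) Filter.atTop (nhds 0) := by
        simpa using heps_to0.div_const M
      have h2 := h1.rpow_const (Or.inr (by positivity : (0:ℝ) ≤ 1/(K:ℝ)))
      rw [Real.zero_rpow (by positivity : (1:ℝ)/(K:ℝ) ≠ 0)] at h2
      have h3 := h2.const_mul r
      rw [mul_zero] at h3
      rw [hδdef]
      exact h3
    -- the key step producing a nearby root of the next truncation
    have hstep : ∀ N, K ≤ N → ∀ z : F, ‖z‖ ≤ r → (P N).eval z = 0 →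
        ∃ z' : F, (‖z'‖ ≤ r ∧ (P (N+1)).eval z' = 0) ∧ ‖z' - z‖ ≤ δ N := by
      intro N hN z hz hzz
      have hPz : ‖(P (N+1)).eval z‖ ≤ eps N := by
        rw [hPeval]
        rw [Finset.sum_range_succ, ← hPeval N z, hzz, zero_add]
        exact le_trans (hsummand z hz _) (heps_ge N (N+1) (by omega))
      obtain ⟨p1, p2, p3⟩ := poly_main hr (P (N+1)) (hPne (N+1) (by omega))
      obtain ⟨hB1, hBK⟩ := hBbounds (N+1) (by omega)
      set B := Multiset.card (broots (P (N+1)) r) with hBdef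
      rw [hgPM (N+1) (by omega)] at p3
      by_contra hcon
      push_neg at hcon
      have hall : ∀ u ∈ broots (P (N+1)) r, δ N < ‖z - u‖ := by
        intro u hu
        rw [broots, Multiset.mem_filter] at hu
        have := hcon u ⟨hu.2, (Polynomial.mem_roots (hPne (N+1) (by omega))).mp hu.1⟩
        rw [norm_sub_rev]
        exact this
      have hprodlt : δ N ^ B < ((broots (P (N+1)) r).map (fun u => ‖z - u‖)).prod := by
        have hcm : B = Multiset.card ((broots (P (N+1)) r).map (fun u => ‖z - u‖)) := by
          rw [Multiset.card_map]
        rw [hcm]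
        apply prod_lt_of_forall_lt (hδnn N)
        · intro h
          rw [Multiset.map_eq_zero] at h
          rw [hBdef, h] at hB1
          simp at hB1
        · intro x hx
          obtain ⟨u, hu, rfl⟩ := Multiset.mem_map.mp hx
          exact hall u hu
      have hchain : M * δ N ^ B < eps N * r ^ B := by
        calc M * δ N ^ B < M * ((broots (P (N+1)) r).map (fun u => ‖z - u‖)).prod :=
              mul_lt_mul_of_pos_left hprodlt hM0
          _ ≤ ‖(P (N+1)).eval z‖ * r ^ B := p3 z hz
          _ ≤ eps N * r ^ B := mul_le_mul_of_nonneg_right hPz (by positivity)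
      have hother : eps N * r ^ B ≤ M * δ N ^ B := by
        have hx0 : (0:ℝ) < eps N / M := div_pos (heps_pos N hN) hM0
        have hx1 : eps N / M ≤ 1 := (div_le_one hM0).mpr (heps_leM N)
        have hδB : δ N ^ B = r ^ B * (eps N / M) ^ (((1:ℝ)/(K:ℝ)) * (B:ℝ)) := by
          rw [hδdef]
          rw [mul_pow]
          congr 1
          rw [← Real.rpow_natCast ((eps N / M) ^ ((1:ℝ)/(K:ℝ))) B]
          rw [← Real.rpow_mul hx0.le]
        have hexp : ((1:ℝ)/(K:ℝ)) * (B:ℝ) ≤ 1 := by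
          rw [div_mul_eq_mul_div, one_mul, div_le_one hKpos]
          exact_mod_cast hBK
        have hxe : eps N / M ≤ (eps N / M) ^ (((1:ℝ)/(K:ℝ)) * (B:ℝ)) := by
          have := Real.rpow_le_rpow_of_exponent_ge hx0 hx1 hexp
          rwa [Real.rpow_one] at this
        calc eps N * r ^ B = M * (eps N / M) * r ^ B := by
              field_simp
          _ ≤ M * ((eps N / M) ^ (((1:ℝ)/(K:ℝ)) * (B:ℝ))) * r ^ B := by
              apply mul_le_mul_of_nonneg_right _ (by positivity)
              exact mul_le_mul_of_nonneg_left hxe hM0.le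
          _ = M * δ N ^ B := by rw [hδB]; ring
      linarith
    -- construct the Cauchy sequence of roots
    obtain ⟨z0, hz0r, hz0z⟩ := hroot K le_rfl
    obtain ⟨w, hwQ, hwD⟩ := exists_seq
      (fun j z => ‖z‖ ≤ r ∧ (P (K + j)).eval z = 0)
      (fun j z z' => ‖z' - z‖ ≤ δ (K + j)) z0 ⟨hz0r, hz0z⟩
      (fun j z hz => by
        obtain ⟨z', hz'⟩ := hstep (K + j) (by omega) z hz.1 hz.2
        exact ⟨z', ⟨hz'.1.1, by rw [show K + (j+1) = K + j + 1 by omega]; exact hz'.1.2⟩, hz'.2⟩)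
    have hfar : ∀ j l, j ≤ l → ‖w l - w j‖ ≤ δ (K + j) := by
      intro j l h
      induction l with
      | zero =>
        have : j = 0 := by omega
        subst this
        simpa using hδnn K
      | succ l IH =>
        rcases Nat.lt_or_ge j (l+1) with h' | h'
        · have hjl : j ≤ l := by omega
          have h1 := IH hjl
          have h2 := hwD l
          have : w (l+1) - w j = (w (l+1) - w l) + (w l - w j) := by ring
          rw [this]
          refine le_trans (IsUltrametricDist.norm_add_le_max _ _) (max_le ?_ h1)
          exact le_trans h2 (hδanti (K+j) (K+l) (by omega))
        · have : j = l + 1 := by omega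
          subst this
          simpa using hδnn (K + (l+1))
    have hcauchy : CauchySeq w := by
      apply cauchySeq_of_le_tendsto_0 (fun N => δ (K + N)) ?_ ?_
      · intro n mm N hn hm
        rcases le_total n mm with h | h
        · rw [dist_eq_norm, norm_sub_rev]
          exact le_trans (hfar n mm h) (hδanti (K+N) (K+n) (by omega))
        · rw [dist_eq_norm]
          exact le_trans (hfar mm n h) (hδanti (K+N) (K+mm) (by omega))
      · have := hδ0.comp (Filter.tendsto_add_atTop_nat K)
        simpa [Function.comp_def, add_comm] using this
    obtain ⟨z, hz⟩ := cauchySeq_tendsto_of_complete hcauchy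
    have hzr : ‖z‖ ≤ r := le_of_tendsto hz.norm (Filter.Eventually.of_forall (fun j => (hwQ j).1))
    have hwz : Filter.Tendsto (fun j => ‖z - w j‖) Filter.atTop (nhds 0) := by
      have h1 : Filter.Tendsto (fun j => z - w j) Filter.atTop (nhds (z - z)) :=
        Filter.Tendsto.sub tendsto_const_nhds hz
      rw [sub_self] at h1
      simpa using h1.norm
    -- Lipschitz bound on the ball
    have hlip : ∀ x y : F, ‖x‖ ≤ r → ‖y‖ ≤ r →
        ‖psEval a x - psEval a y‖ ≤ (M / r) * ‖x - y‖ := by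
      intro x y hx hy
      have hdiff : psEval a x - psEval a y = ∑' n, (a n * x ^ n - a n * y ^ n) := by
        rw [psEval, psEval]
        exact (Summable.tsum_sub (hsum x hx) (hsum y hy)).symm
      rw [hdiff]
      refine IsUltrametricDist.norm_tsum_le_of_forall_le_of_nonneg (by positivity) (fun n => ?_)
      cases n with
      | zero => simp only [pow_zero, mul_one, sub_self, norm_zero]; positivity
      | succ k =>
        rw [← mul_sub, norm_mul]
        have hgeo : ‖x ^ (k+1) - y ^ (k+1)‖ ≤ r ^ k * ‖x - y‖ := by
          rw [← geom_sum₂_mul x y (k+1), norm_mul]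
          apply mul_le_mul_of_nonneg_right _ (norm_nonneg _)
          refine IsUltrametricDist.norm_sum_le_of_forall_le_of_nonneg (by positivity) (fun i hi => ?_)
          rw [Finset.mem_range] at hi
          rw [norm_mul, norm_pow, norm_pow]
          calc ‖x‖ ^ i * ‖y‖ ^ (k + 1 - 1 - i)
              ≤ r ^ i * r ^ (k + 1 - 1 - i) := by
                apply mul_le_mul (pow_le_pow_left₀ (norm_nonneg x) hx i)
                  (pow_le_pow_left₀ (norm_nonneg y) hy _) (by positivity) (by positivity)
            _ = r ^ k := by rw [← pow_add]; congr 1; omega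
        calc ‖a (k+1)‖ * ‖x ^ (k+1) - y ^ (k+1)‖
            ≤ ‖a (k+1)‖ * (r ^ k * ‖x - y‖) :=
              mul_le_mul_of_nonneg_left hgeo (norm_nonneg _)
          _ = (‖a (k+1)‖ * r ^ k) * ‖x - y‖ := by ring
          _ ≤ (M / r) * ‖x - y‖ := by
              apply mul_le_mul_of_nonneg_right _ (norm_nonneg _)
              rw [le_div_iff₀ hr]
              calc ‖a (k+1)‖ * r ^ k * r = t (k+1) := by rw [htdef]; ring
                _ ≤ M := hMle _
    -- conclude
    have hble : ∀ j, ‖psEval a z‖ ≤ max ((M/r) * ‖z - w j‖) (eps (K + j)) := by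
      intro j
      have h1 : psEval a z = (psEval a z - psEval a (w j)) + psEval a (w j) := by ring
      rw [h1]
      refine le_trans (IsUltrametricDist.norm_add_le_max _ _) (max_le_max ?_ ?_)
      · exact hlip z (w j) hzr (hwQ j).1
      · have := htail (w j) (hwQ j).1 (K + j)
        rw [(hwQ j).2, sub_zero] at this
        exact this
    have hlim : Filter.Tendsto (fun j => max ((M/r) * ‖z - w j‖) (eps (K + j)))
        Filter.atTop (nhds (max 0 0)) := by
      apply Filter.Tendsto.max
      · simpa using hwz.const_mul (M/r)
      · have := heps_to0.comp (Filter.tendsto_add_atTop_nat K)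
        simpa [Function.comp_def, add_comm] using this
    have hfin : ‖psEval a z‖ ≤ max 0 0 :=
      ge_of_tendsto hlim (Filter.Eventually.of_forall hble)
    exact ⟨z, norm_le_zero_iff.mp (by simpa using hfin)⟩


end NAPicard

/-- **Non-Archimedean little Picard theorem.** A zero-free entire function on `F` is
constant. -/
theorem stmt14 {F : Type*} [NontriviallyNormedField F] [CompleteSpace F] [IsAlgClosed F]
    (hna : IsNonarchimedean (fun x : F => ‖x‖))
    (a : ℕ → F) (ha : Entire a) (hzf : ∀ z : F, psEval a z ≠ 0) :
    ∃ u : F, ∀ z : F, psEval a z = u := by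
  haveI : IsUltrametricDist F := IsUltrametricDist.isUltrametricDist_of_isNonarchimedean_norm hna
  by_cases h : ∀ n : ℕ, n ≠ 0 → a n = 0
  · refine ⟨a 0, fun z => ?_⟩
    rw [psEval, tsum_eq_single 0 (fun n hn => by rw [h n hn, zero_mul])]
    simp
  · push_neg at h
    obtain ⟨m, hm, ham⟩ := h
    obtain ⟨z, hz⟩ := NAPicard.exists_zero a ha hm ham
    exact absurd hz (hzf z)
end

section
/- Let (z_n)_{n≥1} be a sequence of distinct nonzero elements of F with |z_n| → ∞, let (m_n)_{n≥1} be positive integers, and let m_0 be a non-negative integer. Then the partial products of z^{m_0} ∏_{n=1}^∞ (1 − z/z_n)^{m_n} converge, with respect to the Gauss norm |·|_r for every r > 0, to an entire function f on F which has a zero of multiplicity m_0 at 0, a zero of multiplicity m_n at each z_n, and no other zeros. -/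
open Filter Topology

variable {F : Type*} [NontriviallyNormedField F]

section WPAux
variable [IsUltrametricDist F]

lemma aux_summable [IsUltrametricDist F] [CompleteSpace F] {f : ℕ → F}
    (h : Tendsto (fun n => ‖f n‖) atTop (𝓝 0)) : Summable f := by
  rw [summable_iff_vanishing_norm]
  intro ε hε
  obtain ⟨N, hN⟩ := (Metric.tendsto_atTop.mp h) (ε/2) (by positivity)
  refine ⟨Finset.range N, fun t ht => ?_⟩
  have hb : ∀ i ∈ t, ‖f i‖ ≤ ε/2 := by
    intro i hi
    have hiN : N ≤ i := by
      by_contra hlt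
      exact (Finset.disjoint_left.mp ht hi) (Finset.mem_range.mpr (not_le.mp hlt))
    have := hN i hiN
    rw [Real.dist_eq, sub_zero, abs_of_nonneg (norm_nonneg _)] at this
    linarith
  calc ‖∑ i ∈ t, f i‖ ≤ ε/2 :=
        IsUltrametricDist.norm_sum_le_of_forall_le_of_nonneg (by positivity) hb
    _ < ε := by linarith

lemma aux_eval_tsum {w : F} (P : Polynomial F) : P.eval w = ∑' j : ℕ, P.coeff j * w ^ j := by
  rw [Polynomial.eval_eq_sum_range]
  exact (tsum_eq_sum (fun i hi => by
    rw [Polynomial.coeff_eq_zero_of_natDegree_lt, zero_mul]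
    simpa [Nat.lt_succ_iff] using Finset.mem_range.not.mp hi
    )).symm

lemma aux_norm_one_sub [IsUltrametricDist F] {x : F} (h : ‖x‖ < 1) : ‖1 - x‖ = 1 := by
  have h1 : ‖(1 : F)‖ = 1 := norm_one
  have : ‖(1 : F) + (-x)‖ = max ‖(1:F)‖ ‖-x‖ := by
    apply IsUltrametricDist.norm_add_eq_max_of_norm_ne_norm
    rw [h1, norm_neg]
    exact fun hc => absurd (hc ▸ h) (lt_irrefl _)
  rw [← sub_eq_add_neg] at this
  rw [this, norm_neg, h1, max_eq_left h.le]

lemma aux_mul_coeff_bound [IsUltrametricDist F] {P Q : Polynomial F} {r Cp Cq : ℝ}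
    (hr : 0 < r) (hCp : 0 ≤ Cp) (hCq : 0 ≤ Cq)
    (hP : ∀ j, ‖P.coeff j‖ * r ^ j ≤ Cp) (hQ : ∀ j, ‖Q.coeff j‖ * r ^ j ≤ Cq) :
    ∀ j, ‖(P * Q).coeff j‖ * r ^ j ≤ Cp * Cq := by
  intro j
  have hrj : (0:ℝ) < r ^ j := pow_pos hr j
  rw [Polynomial.coeff_mul, ← le_div_iff₀ hrj]
  apply IsUltrametricDist.norm_sum_le_of_forall_le_of_nonneg (by positivity)
  rintro ⟨a, b⟩ hab
  have hab' : a + b = j := Finset.HasAntidiagonal.mem_antidiagonal.mp hab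
  rw [le_div_iff₀ hrj]
  have : ‖P.coeff a * Q.coeff b‖ * r ^ j ≤ Cp * Cq := by
    rw [norm_mul, ← hab', pow_add]
    calc ‖P.coeff a‖ * ‖Q.coeff b‖ * (r ^ a * r ^ b)
        = (‖P.coeff a‖ * r ^ a) * (‖Q.coeff b‖ * r ^ b) := by ring
      _ ≤ Cp * Cq := mul_le_mul (hP a) (hQ b) (by positivity) hCp
  simpa using this

lemma aux_one_coeff_bound {r C : ℝ} (hr : 0 < r) (hC : 1 ≤ C) :
    ∀ j, ‖(1 : Polynomial F).coeff j‖ * r ^ j ≤ C := by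
  intro j
  rcases eq_or_ne j 0 with rfl | hj
  · simpa using hC
  · simp [Polynomial.coeff_one, hj]
    positivity

lemma aux_pow_coeff_bound [IsUltrametricDist F] {Q : Polynomial F} {r C : ℝ}
    (hr : 0 < r) (hC : 0 ≤ C)
    (hQ : ∀ j, ‖Q.coeff j‖ * r ^ j ≤ C) (k : ℕ) :
    ∀ j, ‖(Q ^ k).coeff j‖ * r ^ j ≤ C ^ k := by
  induction k with
  | zero => simpa using aux_one_coeff_bound hr le_rfl
  | succ k ih =>
      intro j
      rw [pow_succ, pow_succ]
      exact aux_mul_coeff_bound hr (by positivity) hC ih hQ j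

lemma aux_prod_coeff_bound [IsUltrametricDist F] {ι : Type*} {s : Finset ι}
    {g : ι → Polynomial F} {c : ι → ℝ} {r : ℝ} (hr : 0 < r)
    (hc : ∀ i ∈ s, 0 ≤ c i)
    (hg : ∀ i ∈ s, ∀ j, ‖(g i).coeff j‖ * r ^ j ≤ c i) :
    ∀ j, ‖(∏ i ∈ s, g i).coeff j‖ * r ^ j ≤ ∏ i ∈ s, c i := by
  classical
  induction s using Finset.induction_on with
  | empty => simpa using aux_one_coeff_bound hr le_rfl
  | insert _ _ hnot ih =>
      rename_i i s
      rw [Finset.prod_insert hnot, Finset.prod_insert hnot]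
      exact aux_mul_coeff_bound hr (hc i (Finset.mem_insert_self i s))
        (Finset.prod_nonneg fun x hx => hc x (Finset.mem_insert_of_mem hx))
        (hg i (Finset.mem_insert_self i s))
        (ih (fun x hx => hc x (Finset.mem_insert_of_mem hx))
            (fun x hx => hg x (Finset.mem_insert_of_mem hx)))

/-- Coefficient bound for `(1 - uX)^m - 1`. -/

lemma aux_factor_sub_one_bound [IsUltrametricDist F] {u : F} {r : ℝ} (hr : 0 < r)
    (h : ‖u‖ * r ≤ 1) (m : ℕ) :
    ∀ j, ‖(((1 - Polynomial.C u * Polynomial.X) ^ m - 1 : Polynomial F)).coeff j‖ * r ^ j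
       ≤ ‖u‖ * r := by
  have hur : 0 ≤ ‖u‖ * r := by positivity
  induction m with
  | zero => intro j; simp; positivity
  | succ m ih =>
      intro j
      have hsplit : ((1 - Polynomial.C u * Polynomial.X) ^ (m+1) - 1 : Polynomial F)
          = ((1 - Polynomial.C u * Polynomial.X) ^ m - 1) * (1 - Polynomial.C u * Polynomial.X)
            + (- (Polynomial.C u * Polynomial.X)) := by ring
      rw [hsplit, Polynomial.coeff_add]
      have hb : ∀ j, ‖(1 - Polynomial.C u * Polynomial.X : Polynomial F).coeff j‖ * r ^ j ≤ 1 := by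
        intro j
        match j with
        | 0 => simp
        | 1 => simpa [Polynomial.coeff_one] using h
        | (j+2) => simp [Polynomial.coeff_one, Polynomial.coeff_X]
      have h1 := aux_mul_coeff_bound hr hur zero_le_one ih hb j
      rw [mul_one] at h1
      have h2 : ‖(-(Polynomial.C u * Polynomial.X) : Polynomial F).coeff j‖ * r ^ j ≤ ‖u‖ * r := by
        match j with
        | 0 => simp; positivity
        | 1 => simp
        | (j+2) => simp [Polynomial.coeff_X]; positivity
      calc ‖_ + _‖ * r ^ j ≤ max (‖_‖ * r ^ j) (‖_‖ * r ^ j) := by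
            rw [← max_mul_of_nonneg _ _ (le_of_lt (pow_pos hr j))]
            exact mul_le_mul_of_nonneg_right (IsUltrametricDist.norm_add_le_max _ _)
              (le_of_lt (pow_pos hr j))
        _ ≤ ‖u‖ * r := max_le h1 h2

lemma aux_taylor_coeff_bound [IsUltrametricDist F] {q : Polynomial F} {z0 : F} {ρ C : ℝ}
    (hρ : 0 < ρ) (hz0 : ‖z0‖ ≤ ρ) (hC : 0 ≤ C)
    (h : ∀ j, ‖q.coeff j‖ * ρ ^ j ≤ C) (k : ℕ) :
    ‖(Polynomial.taylor z0 q).coeff k‖ * ρ ^ k ≤ C := by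
  have hρk : (0:ℝ) < ρ ^ k := pow_pos hρ k
  rw [← le_div_iff₀ hρk, Polynomial.taylor_coeff, Polynomial.eval_eq_sum_range]
  apply IsUltrametricDist.norm_sum_le_of_forall_le_of_nonneg (by positivity)
  intro i _
  rw [Polynomial.hasseDeriv_coeff]
  rw [le_div_iff₀ hρk]
  have h1 : ‖((i + k).choose k : F)‖ ≤ 1 := IsUltrametricDist.norm_natCast_le_one F _
  have h2 : ‖z0 ^ i‖ ≤ ρ ^ i := by
    rw [norm_pow]; exact pow_le_pow_left₀ (norm_nonneg _) hz0 i
  calc ‖((i + k).choose k : F) * q.coeff (i + k) * z0 ^ i‖ * ρ ^ k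
      = ‖((i + k).choose k : F)‖ * ‖q.coeff (i + k)‖ * ‖z0 ^ i‖ * ρ ^ k := by
        rw [norm_mul, norm_mul]
    _ ≤ 1 * ‖q.coeff (i + k)‖ * ρ ^ i * ρ ^ k := by
        apply mul_le_mul_of_nonneg_right _ hρk.le
        exact mul_le_mul (mul_le_mul_of_nonneg_right h1 (norm_nonneg _)) h2 (norm_nonneg _)
          (by positivity)
    _ = ‖q.coeff (i + k)‖ * ρ ^ (i + k) := by rw [pow_add]; ring
    _ ≤ C := h (i + k)

/-- If a sequence tends to `L` and its norms are eventually constant equal to a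
nonzero value, then `L ≠ 0`. -/

lemma aux_lim_ne_zero {u : ℕ → F} {L : F} (hu : Filter.Tendsto u Filter.atTop (nhds L))
    {N2 : ℕ} (hconst : ∀ N ≥ N2, ‖u N‖ = ‖u N2‖) (hne : u N2 ≠ 0) : L ≠ 0 := by
  have h1 : Filter.Tendsto (fun N => ‖u N‖) Filter.atTop (nhds ‖L‖) := hu.norm
  have h2 : Filter.Tendsto (fun N => ‖u N‖) Filter.atTop (nhds ‖u N2‖) := by
    apply tendsto_atTop_of_eventually_const (i₀ := N2)
    exact hconst
  have : ‖L‖ = ‖u N2‖ := tendsto_nhds_unique h1 h2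
  intro hL
  rw [hL, norm_zero] at this
  exact hne (norm_eq_zero.mp this.symm)

lemma aux_norm_add_mul_le [IsUltrametricDist F] {x y : F} {t C : ℝ} (ht : 0 ≤ t)
    (hx : ‖x‖ * t ≤ C) (hy : ‖y‖ * t ≤ C) : ‖x + y‖ * t ≤ C := by
  refine le_trans (mul_le_mul_of_nonneg_right (IsUltrametricDist.norm_add_le_max x y) ht) ?_
  rw [max_mul_of_nonneg _ _ ht]
  exact max_le hx hy

lemma aux_linear_coeff_bound {u : F} {r : ℝ} (hr : 0 < r) :
    ∀ j, ‖(1 - Polynomial.C u * Polynomial.X : Polynomial F).coeff j‖ * r ^ j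
      ≤ max 1 (‖u‖ * r) := by
  intro j
  match j with
  | 0 => simpa using le_max_left 1 (‖u‖ * r)
  | 1 =>
      simp only [Polynomial.coeff_sub, Polynomial.coeff_one, Polynomial.coeff_C_mul,
        Polynomial.coeff_X_one, mul_one, pow_one]
      rw [show ((if 1 = 0 then (1:F) else 0) - u) = -u by simp, norm_neg]
      exact le_max_right _ _
  | (j+2) =>
      simp only [Polynomial.coeff_sub, Polynomial.coeff_one, Polynomial.coeff_C_mul,
        Polynomial.coeff_X]
      norm_num

lemma aux_Xpow_coeff_bound {r : ℝ} (hr : 0 < r) (m0 : ℕ) :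
    ∀ j, ‖(Polynomial.X ^ m0 : Polynomial F).coeff j‖ * r ^ j ≤ r ^ m0 := by
  intro j
  rw [Polynomial.coeff_X_pow]
  by_cases hj : j = m0
  · subst hj; simp
  · simp [hj]
    positivity

/-- The partial products. -/

noncomputable def wpP (z : ℕ → F) (m : ℕ → ℕ) (m0 : ℕ) (N : ℕ) : Polynomial F :=
  Polynomial.X ^ m0 * ∏ n ∈ Finset.range N, (1 - Polynomial.C (z n)⁻¹ * Polynomial.X) ^ m n

variable [IsUltrametricDist F]

/-- Uniform bound on coefficients of the partial products. -/

lemma wp_bound (z : ℕ → F) (hz0 : ∀ n, z n ≠ 0)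
    (hz : Tendsto (fun n : ℕ => ‖z n‖) atTop atTop) (m : ℕ → ℕ) (m0 : ℕ)
    {r : ℝ} (hr : 0 < r) :
    ∃ B : ℝ, 0 < B ∧ ∀ N j, ‖(wpP z m m0 N).coeff j‖ * r ^ j ≤ B := by
  classical
  obtain ⟨N0, hN0⟩ := (hz.eventually_ge_atTop r).exists_forall_of_atTop
  set c : ℕ → ℝ := fun n => (max 1 (‖z n‖⁻¹ * r)) ^ m n with hc
  have hc1 : ∀ n, 1 ≤ c n := fun n => one_le_pow₀ (le_max_left _ _)
  have hc0 : ∀ n, 0 ≤ c n := fun n => le_trans zero_le_one (hc1 n)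
  refine ⟨r ^ m0 * ∏ n ∈ Finset.range N0, c n, by positivity, ?_⟩
  intro N j
  have hfac : ∀ n ∈ Finset.range N, ∀ j,
      ‖(((1 - Polynomial.C (z n)⁻¹ * Polynomial.X) ^ m n : Polynomial F)).coeff j‖ * r ^ j
        ≤ c n := by
    intro n _
    apply aux_pow_coeff_bound hr (le_trans zero_le_one (le_max_left _ _))
    intro j
    simpa [norm_inv] using aux_linear_coeff_bound (u := (z n)⁻¹) hr j
  have htot := aux_mul_coeff_bound hr (pow_pos hr m0).le
    (Finset.prod_nonneg fun i _ => hc0 i)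
    (aux_Xpow_coeff_bound hr m0)
    (aux_prod_coeff_bound hr (fun i _ => hc0 i) hfac) j
  refine htot.trans ?_
  have h1 : ∏ n ∈ Finset.range N, c n = ∏ n ∈ Finset.range N ∩ Finset.range N0, c n := by
    refine (Finset.prod_subset Finset.inter_subset_left ?_).symm
    intro x hx hx'
    have hxN0 : N0 ≤ x := by
      rw [Finset.mem_range] at hx
      simp only [Finset.mem_inter, Finset.mem_range, not_and] at hx'
      by_contra hcon
      exact absurd (hx' hx) (by omega)
    have hzx : (0:ℝ) < ‖z x‖ := norm_pos_iff.mpr (hz0 x)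
    have hle : ‖z x‖⁻¹ * r ≤ 1 := by
      calc ‖z x‖⁻¹ * r ≤ ‖z x‖⁻¹ * ‖z x‖ :=
            mul_le_mul_of_nonneg_left (hN0 x hxN0) (by positivity)
        _ = 1 := inv_mul_cancel₀ hzx.ne'
    simp [hc, max_eq_left hle]
  have h2 : ∏ n ∈ Finset.range N ∩ Finset.range N0, c n ≤ ∏ n ∈ Finset.range N0, c n := by
    have hsub : Finset.range N ∩ Finset.range N0 ⊆ Finset.range N0 :=
      Finset.inter_subset_right
    have hsd := Finset.prod_sdiff (f := c) hsub
    rw [← hsd]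
    refine le_mul_of_one_le_left (Finset.prod_nonneg fun i _ => hc0 i) ?_
    exact Finset.prod_induction _ _ (fun a b ha hb => by nlinarith) le_rfl fun i _ => hc1 i
  rw [h1]
  exact mul_le_mul_of_nonneg_left h2 (by positivity)

/-- Main Cauchy estimate. -/

lemma wp_key1 (z : ℕ → F) (hz0 : ∀ n, z n ≠ 0)
    (hz : Tendsto (fun n : ℕ => ‖z n‖) atTop atTop) (m : ℕ → ℕ) (m0 : ℕ)
    {r η : ℝ} (hr : 0 < r) (hη : 0 < η) :
    ∃ N1 : ℕ, ∀ N ≥ N1, ∀ M ≥ N, ∀ j,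
      ‖(wpP z m m0 M).coeff j - (wpP z m m0 N).coeff j‖ * r ^ j ≤ η := by
  classical
  obtain ⟨B, hBpos, hB⟩ := wp_bound z hz0 hz m m0 hr
  obtain ⟨N1, hN1⟩ := (hz.eventually_ge_atTop (max r (B * r / η))).exists_forall_of_atTop
  refine ⟨N1, ?_⟩
  have step : ∀ k, N1 ≤ k → ∀ j,
      ‖(wpP z m m0 (k+1)).coeff j - (wpP z m m0 k).coeff j‖ * r ^ j ≤ η := by
    intro k hk j
    have hzk : (0:ℝ) < ‖z k‖ := norm_pos_iff.mpr (hz0 k)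
    have hrk : r ≤ ‖z k‖ := le_trans (le_max_left _ _) (hN1 k hk)
    have hu1 : ‖(z k)⁻¹‖ * r ≤ 1 := by
      rw [norm_inv]
      calc ‖z k‖⁻¹ * r ≤ ‖z k‖⁻¹ * ‖z k‖ := mul_le_mul_of_nonneg_left hrk (by positivity)
        _ = 1 := inv_mul_cancel₀ hzk.ne'
    have hPdiff : wpP z m m0 (k+1)
        = wpP z m m0 k * ((1 - Polynomial.C (z k)⁻¹ * Polynomial.X) ^ m k - 1)
          + wpP z m m0 k := by
      unfold wpP; rw [Finset.prod_range_succ]; ring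
    have hco : (wpP z m m0 (k+1)).coeff j - (wpP z m m0 k).coeff j
        = ((wpP z m m0 k) * ((1 - Polynomial.C (z k)⁻¹ * Polynomial.X) ^ m k - 1)).coeff j := by
      rw [hPdiff, Polynomial.coeff_add]; ring
    rw [hco]
    have hbd := aux_mul_coeff_bound hr hBpos.le (by positivity) (hB k)
      (aux_factor_sub_one_bound hr hu1 (m k)) j
    refine hbd.trans ?_
    rw [norm_inv]
    have h2 : B * r / η ≤ ‖z k‖ := le_trans (le_max_right _ _) (hN1 k hk)
    rw [div_le_iff₀ hη] at h2
    calc B * (‖z k‖⁻¹ * r) = (B * r) * ‖z k‖⁻¹ := by ring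
      _ ≤ (‖z k‖ * η) * ‖z k‖⁻¹ := mul_le_mul_of_nonneg_right h2 (by positivity)
      _ = η := by field_simp
  intro N hN M hM j
  induction M, hM using Nat.le_induction with
  | base => simp only [sub_self, norm_zero, zero_mul]; exact hη.le
  | succ M hNM ih =>
      have hsplit : (wpP z m m0 (M+1)).coeff j - (wpP z m m0 N).coeff j
          = ((wpP z m m0 (M+1)).coeff j - (wpP z m m0 M).coeff j)
            + ((wpP z m m0 M).coeff j - (wpP z m m0 N).coeff j) := by ring
      rw [hsplit]
      exact aux_norm_add_mul_le (pow_pos hr j).le (step M (le_trans hN hNM) j) ih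

lemma wp_limit [CompleteSpace F] (z : ℕ → F) (hz0 : ∀ n, z n ≠ 0)
    (hz : Tendsto (fun n : ℕ => ‖z n‖) atTop atTop) (m : ℕ → ℕ) (m0 : ℕ) :
    ∃ a : ℕ → F,
      (∀ j, Tendsto (fun N => (wpP z m m0 N).coeff j) atTop (𝓝 (a j))) ∧
      (∀ r : ℝ, 0 < r → ∀ η : ℝ, 0 < η → ∃ N1, ∀ N ≥ N1, ∀ j,
        ‖(wpP z m m0 N).coeff j - a j‖ * r ^ j ≤ η) := by
  have hcauchy : ∀ j, ∃ L, Tendsto (fun N => (wpP z m m0 N).coeff j) atTop (𝓝 L) := by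
    intro j
    apply cauchySeq_tendsto_of_complete
    rw [Metric.cauchySeq_iff']
    intro ε hε
    obtain ⟨N1, hN1⟩ := wp_key1 z hz0 hz m m0 one_pos (half_pos hε)
    refine ⟨N1, fun n hn => ?_⟩
    have h := hN1 N1 le_rfl n hn j
    rw [one_pow, mul_one] at h
    rw [dist_eq_norm]
    linarith
  choose a ha using hcauchy
  refine ⟨a, ha, ?_⟩
  intro r hr η hη
  obtain ⟨N1, hN1⟩ := wp_key1 z hz0 hz m m0 hr (half_pos hη)
  refine ⟨N1, fun N hN j => ?_⟩
  have hT : Tendsto (fun M => ‖(wpP z m m0 N).coeff j - (wpP z m m0 M).coeff j‖ * r ^ j)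
      atTop (𝓝 (‖(wpP z m m0 N).coeff j - a j‖ * r ^ j)) :=
    (((tendsto_const_nhds (x := (wpP z m m0 N).coeff j)).sub (ha j)).norm).mul_const _
  have hev : ∀ᶠ M in atTop,
      ‖(wpP z m m0 N).coeff j - (wpP z m m0 M).coeff j‖ * r ^ j ≤ η/2 := by
    filter_upwards [eventually_ge_atTop N] with M hM
    rw [norm_sub_rev]
    exact hN1 N hN M hM j
  exact le_trans (le_of_tendsto hT hev) (by linarith)

lemma wp_entire [CompleteSpace F] {z : ℕ → F} {m : ℕ → ℕ} {m0 : ℕ} {a : ℕ → F}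
    (key2 : ∀ r : ℝ, 0 < r → ∀ η : ℝ, 0 < η → ∃ N1, ∀ N ≥ N1, ∀ j,
      ‖(wpP z m m0 N).coeff j - a j‖ * r ^ j ≤ η) :
    ∀ r : ℝ, 0 < r → Tendsto (fun n : ℕ => ‖a n‖ * r ^ n) atTop (𝓝 0) := by
  intro r hr
  rw [Metric.tendsto_atTop]
  intro ε hε
  obtain ⟨N, hN⟩ := key2 r hr (ε/2) (by positivity)
  refine ⟨(wpP z m m0 N).natDegree + 1, fun j hj => ?_⟩
  have hc0 : (wpP z m m0 N).coeff j = 0 :=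
    Polynomial.coeff_eq_zero_of_natDegree_lt (by omega)
  have h := hN N le_rfl j
  rw [hc0, zero_sub, norm_neg] at h
  rw [Real.dist_eq, sub_zero, abs_of_nonneg (by positivity)]
  linarith

lemma wp_eval_tendsto [CompleteSpace F] {z : ℕ → F} {m : ℕ → ℕ} {m0 : ℕ} {a : ℕ → F}
    (hEnt : ∀ r : ℝ, 0 < r → Tendsto (fun n : ℕ => ‖a n‖ * r ^ n) atTop (𝓝 0))
    (key2 : ∀ r : ℝ, 0 < r → ∀ η : ℝ, 0 < η → ∃ N1, ∀ N ≥ N1, ∀ j,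
      ‖(wpP z m m0 N).coeff j - a j‖ * r ^ j ≤ η) (w : F) :
    Summable (fun n : ℕ => a n * w ^ n) ∧
      Tendsto (fun N => (wpP z m m0 N).eval w) atTop (𝓝 (psEval a w)) := by
  set r : ℝ := ‖w‖ + 1 with hrdef
  have hr : 0 < r := by positivity
  have hwr : ‖w‖ ≤ r := by rw [hrdef]; linarith
  have hterm : ∀ n : ℕ, ‖a n * w ^ n‖ ≤ ‖a n‖ * r ^ n := by
    intro n
    rw [norm_mul, norm_pow]
    exact mul_le_mul_of_nonneg_left (pow_le_pow_left₀ (norm_nonneg w) hwr n) (norm_nonneg _)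
  have hsum : Summable (fun n : ℕ => a n * w ^ n) :=
    aux_summable (squeeze_zero (fun n => norm_nonneg _) hterm (hEnt r hr))
  refine ⟨hsum, ?_⟩
  rw [Metric.tendsto_atTop]
  intro ε hε
  obtain ⟨N1, hN1⟩ := key2 r hr (ε/2) (by positivity)
  refine ⟨N1, fun N hN => ?_⟩
  rw [dist_eq_norm]
  have hPsum : Summable (fun n : ℕ => (wpP z m m0 N).coeff n * w ^ n) := by
    apply summable_of_ne_finset_zero (s := Finset.range ((wpP z m m0 N).natDegree + 1))
    intro i hi
    rw [Polynomial.coeff_eq_zero_of_natDegree_lt, zero_mul]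
    simpa [Nat.lt_succ_iff] using Finset.mem_range.not.mp hi
  have heq : (wpP z m m0 N).eval w - psEval a w
      = ∑' n : ℕ, ((wpP z m m0 N).coeff n - a n) * w ^ n := by
    rw [psEval, aux_eval_tsum, ← Summable.tsum_sub hPsum hsum]
    congr 1; funext n; ring
  rw [heq]
  have hb : ∀ n : ℕ, ‖((wpP z m m0 N).coeff n - a n) * w ^ n‖ ≤ ε/2 := by
    intro n
    rw [norm_mul, norm_pow]
    calc ‖(wpP z m m0 N).coeff n - a n‖ * ‖w‖ ^ n
        ≤ ‖(wpP z m m0 N).coeff n - a n‖ * r ^ n :=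
          mul_le_mul_of_nonneg_left (pow_le_pow_left₀ (norm_nonneg w) hwr n) (norm_nonneg _)
      _ ≤ ε/2 := hN1 N hN n
  calc ‖∑' n : ℕ, ((wpP z m m0 N).coeff n - a n) * w ^ n‖
      ≤ ε/2 := IsUltrametricDist.norm_tsum_le_of_forall_le_of_nonneg (by positivity) hb
    _ < ε := by linarith

lemma wp_eval_formula (z : ℕ → F) (m : ℕ → ℕ) (m0 : ℕ) (N : ℕ) (w : F) :
    (wpP z m m0 N).eval w = w ^ m0 * ∏ n ∈ Finset.range N, (1 - (z n)⁻¹ * w) ^ m n := by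
  simp [wpP, Polynomial.eval_prod]

lemma wp_ne_zero [CompleteSpace F] {z : ℕ → F} (hz0 : ∀ n, z n ≠ 0)
    (hz : Tendsto (fun n : ℕ => ‖z n‖) atTop atTop) {m : ℕ → ℕ} {m0 : ℕ} {a : ℕ → F}
    (heval : ∀ w : F, Tendsto (fun N => (wpP z m m0 N).eval w) atTop (𝓝 (psEval a w)))
    (w : F) (hw : w ≠ 0) (hwz : ∀ n, w ≠ z n) : psEval a w ≠ 0 := by
  obtain ⟨N2, hN2⟩ := (hz.eventually_gt_atTop ‖w‖).exists_forall_of_atTop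
  have hfac1 : ∀ n, N2 ≤ n → ‖(1 - (z n)⁻¹ * w) ^ m n‖ = 1 := by
    intro n hn
    have hzn : (0:ℝ) < ‖z n‖ := lt_of_le_of_lt (norm_nonneg w) (hN2 n hn)
    rw [norm_pow, aux_norm_one_sub, one_pow]
    rw [norm_mul, norm_inv, ← div_eq_inv_mul, div_lt_one hzn]
    exact hN2 n hn
  refine aux_lim_ne_zero (heval w) (N2 := N2) ?_ ?_
  · intro N hN
    rw [wp_eval_formula, wp_eval_formula, ← Finset.prod_range_mul_prod_Ico _ hN, ← mul_assoc]
    rw [norm_mul (α := F), norm_prod]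
    rw [Finset.prod_eq_one fun i hi => hfac1 i (Finset.mem_Ico.mp hi).1, mul_one]
  · rw [wp_eval_formula]
    refine mul_ne_zero (pow_ne_zero _ hw) (Finset.prod_ne_zero_iff.mpr fun n _ => ?_)
    refine pow_ne_zero _ fun hc => ?_
    have h1 : (1 : F) = (z n)⁻¹ * w := sub_eq_zero.mp hc
    have h2 : z n * 1 = z n * ((z n)⁻¹ * w) := congrArg (z n * ·) h1
    rw [mul_one, ← mul_assoc, mul_inv_cancel₀ (hz0 n), one_mul] at h2
    exact hwz n h2.symm

lemma wp_hasOrderAt [CompleteSpace F] {z : ℕ → F} (hinj : Function.Injective z)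
    (hz0 : ∀ n, z n ≠ 0) (hz : Tendsto (fun n : ℕ => ‖z n‖) atTop atTop)
    {m : ℕ → ℕ} {m0 : ℕ} {a : ℕ → F}
    (heval : ∀ w : F, Tendsto (fun N => (wpP z m m0 N).eval w) atTop (𝓝 (psEval a w)))
    (n : ℕ) :
    ∃ δ > (0:ℝ), ∃ b : ℕ → F,
      (∀ w : F, ‖w - z n‖ < δ → psEval a w = ∑' k : ℕ, b k * (w - z n) ^ k) ∧
      (∀ j < m n, b j = 0) ∧ b (m n) ≠ 0 := by
  classical
  set z0 : F := z n with hz0def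
  set μ : ℕ := m n with hμdef
  have hρ : (0:ℝ) < ‖z0‖ := norm_pos_iff.mpr (hz0 n)
  -- Cauchy estimate for Taylor coefficients
  have keyT : ∀ η : ℝ, 0 < η → ∃ N1, ∀ N ≥ N1, ∀ M ≥ N, ∀ k,
      ‖(Polynomial.taylor z0 (wpP z m m0 M)).coeff k
        - (Polynomial.taylor z0 (wpP z m m0 N)).coeff k‖ * ‖z0‖ ^ k ≤ η := by
    intro η hη
    obtain ⟨N1, hN1⟩ := wp_key1 z hz0 hz m m0 hρ hη
    refine ⟨N1, fun N hN M hM k => ?_⟩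
    have hq := aux_taylor_coeff_bound (q := wpP z m m0 M - wpP z m m0 N) hρ le_rfl hη.le
      (fun j => by simpa [Polynomial.coeff_sub] using hN1 N hN M hM j) k
    simpa [map_sub, Polynomial.coeff_sub] using hq
  -- limits of Taylor coefficients
  have hcauchy : ∀ k, ∃ L, Tendsto
      (fun N => (Polynomial.taylor z0 (wpP z m m0 N)).coeff k) atTop (𝓝 L) := by
    intro k
    apply cauchySeq_tendsto_of_complete
    rw [Metric.cauchySeq_iff']
    intro ε hε
    have hk : (0:ℝ) < ‖z0‖ ^ k := pow_pos hρ k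
    obtain ⟨N1, hN1⟩ := keyT (ε/2 * ‖z0‖ ^ k) (by positivity)
    refine ⟨N1, fun M hM => ?_⟩
    have h := hN1 N1 le_rfl M hM k
    rw [dist_eq_norm]
    have h2 : ‖(Polynomial.taylor z0 (wpP z m m0 M)).coeff k
        - (Polynomial.taylor z0 (wpP z m m0 N1)).coeff k‖ ≤ ε/2 := by
      by_contra hcon
      push_neg at hcon
      nlinarith
    linarith
  choose b hb using hcauchy
  have keyT2 : ∀ η : ℝ, 0 < η → ∃ N1, ∀ N ≥ N1, ∀ k,
      ‖(Polynomial.taylor z0 (wpP z m m0 N)).coeff k - b k‖ * ‖z0‖ ^ k ≤ η := by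
    intro η hη
    obtain ⟨N1, hN1⟩ := keyT (η/2) (half_pos hη)
    refine ⟨N1, fun N hN k => ?_⟩
    have hT : Tendsto (fun M => ‖(Polynomial.taylor z0 (wpP z m m0 N)).coeff k
        - (Polynomial.taylor z0 (wpP z m m0 M)).coeff k‖ * ‖z0‖ ^ k)
        atTop (𝓝 (‖(Polynomial.taylor z0 (wpP z m m0 N)).coeff k - b k‖ * ‖z0‖ ^ k)) :=
      ((tendsto_const_nhds.sub (hb k)).norm).mul_const _
    have hev : ∀ᶠ M in atTop, ‖(Polynomial.taylor z0 (wpP z m m0 N)).coeff k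
        - (Polynomial.taylor z0 (wpP z m m0 M)).coeff k‖ * ‖z0‖ ^ k ≤ η/2 := by
      filter_upwards [eventually_ge_atTop N] with M hM
      rw [norm_sub_rev]
      exact hN1 N hN M hM k
    exact le_trans (le_of_tendsto hT hev) (by linarith)
  -- factorization for N > n
  have hlin : Polynomial.C (-(z0)⁻¹) * (Polynomial.X - Polynomial.C z0)
      = 1 - Polynomial.C (z0)⁻¹ * Polynomial.X := by
    have hC : Polynomial.C ((z0)⁻¹) * Polynomial.C z0 = 1 := by
      rw [← Polynomial.C_mul, inv_mul_cancel₀ (hz0 n), Polynomial.C_1]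
    calc Polynomial.C (-(z0)⁻¹) * (Polynomial.X - Polynomial.C z0)
        = -(Polynomial.C ((z0)⁻¹) * Polynomial.X)
          + Polynomial.C ((z0)⁻¹) * Polynomial.C z0 := by rw [map_neg]; ring
      _ = 1 - Polynomial.C ((z0)⁻¹) * Polynomial.X := by rw [hC]; ring
  have hfact : ∀ N, n < N → wpP z m m0 N
      = (Polynomial.X - Polynomial.C z0) ^ μ
        * ((Polynomial.C (-(z0)⁻¹)) ^ μ * (Polynomial.X ^ m0
          * ∏ k ∈ (Finset.range N).erase n,
              (1 - Polynomial.C (z k)⁻¹ * Polynomial.X) ^ m k)) := by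
    intro N hN
    unfold wpP
    rw [← Finset.mul_prod_erase (Finset.range N) _ (Finset.mem_range.mpr hN)]
    rw [← hz0def, ← hμdef, ← hlin, mul_pow]
    ring
  have htaylorfact : ∀ N, n < N → Polynomial.taylor z0 (wpP z m m0 N)
      = Polynomial.X ^ μ * Polynomial.taylor z0 ((Polynomial.C (-(z0)⁻¹)) ^ μ
        * (Polynomial.X ^ m0 * ∏ k ∈ (Finset.range N).erase n,
            (1 - Polynomial.C (z k)⁻¹ * Polynomial.X) ^ m k)) := by
    intro N hN
    rw [hfact N hN, Polynomial.taylor_mul]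
    congr 1
    rw [Polynomial.taylor_apply, Polynomial.pow_comp, Polynomial.sub_comp,
      Polynomial.X_comp, Polynomial.C_comp]
    simp
  have hT0 : ∀ N, n < N → ∀ k, k < μ →
      (Polynomial.taylor z0 (wpP z m m0 N)).coeff k = 0 := by
    intro N hN k hk
    rw [htaylorfact N hN, mul_comm, Polynomial.coeff_mul_X_pow']
    simp [Nat.not_le.mpr hk]
  have hTμ : ∀ N, n < N → (Polynomial.taylor z0 (wpP z m m0 N)).coeff μ
      = (-(z0)⁻¹) ^ μ * (z0 ^ m0 * ∏ k ∈ (Finset.range N).erase n,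
          (1 - (z k)⁻¹ * z0) ^ m k) := by
    intro N hN
    rw [htaylorfact N hN, mul_comm, Polynomial.coeff_mul_X_pow', if_pos le_rfl,
      Nat.sub_self, Polynomial.taylor_coeff_zero]
    simp [Polynomial.eval_prod]
  -- b vanishes below μ
  have hb0 : ∀ k, k < μ → b k = 0 := by
    intro k hk
    refine tendsto_nhds_unique (hb k) (tendsto_atTop_of_eventually_const (i₀ := n+1) ?_)
    intro N hN
    exact hT0 N (by omega) k hk
  -- b μ ≠ 0
  have hbμ : b μ ≠ 0 := by
    obtain ⟨N2', hN2'⟩ := (hz.eventually_gt_atTop ‖z0‖).exists_forall_of_atTop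
    set N2 : ℕ := max N2' (n+1) with hN2def
    have hn2 : n < N2 := lt_of_lt_of_le (Nat.lt_succ_self n) (le_max_right _ _)
    have hg1 : ∀ i, N2 ≤ i → ‖(1 - (z i)⁻¹ * z0) ^ m i‖ = 1 := by
      intro i hi
      have hi' : N2' ≤ i := le_trans (le_max_left _ _) hi
      have hzi : (0:ℝ) < ‖z i‖ := lt_of_le_of_lt (norm_nonneg z0) (hN2' i hi')
      rw [norm_pow, aux_norm_one_sub, one_pow]
      rw [norm_mul, norm_inv, ← div_eq_inv_mul, div_lt_one hzi]
      exact hN2' i hi'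
    have hsplit : ∀ N, N2 ≤ N → ((Finset.range N).erase n)
        = ((Finset.range N2).erase n) ∪ Finset.Ico N2 N := by
      intro N hN
      ext x
      simp only [Finset.mem_erase, Finset.mem_range, Finset.mem_union, Finset.mem_Ico]
      omega
    have hdis : ∀ N, Disjoint ((Finset.range N2).erase n) (Finset.Ico N2 N) := by
      intro N
      rw [Finset.disjoint_left]
      intro x hx hx'
      simp only [Finset.mem_erase, Finset.mem_range] at hx
      simp only [Finset.mem_Ico] at hx'
      omega
    refine aux_lim_ne_zero (hb μ) (N2 := N2) ?_ ?_
    · intro N hN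
      rw [hTμ N (lt_of_lt_of_le hn2 hN), hTμ N2 hn2, hsplit N hN,
        Finset.prod_union (hdis N), ← mul_assoc, ← mul_assoc]
      rw [norm_mul (α := F), norm_prod]
      rw [Finset.prod_eq_one fun i hi => hg1 i (Finset.mem_Ico.mp hi).1, mul_one, mul_assoc]
    · rw [hTμ N2 hn2]
      refine mul_ne_zero (pow_ne_zero _ (neg_ne_zero.mpr (inv_ne_zero (hz0 n)))) ?_
      refine mul_ne_zero (pow_ne_zero _ (hz0 n)) ?_
      refine Finset.prod_ne_zero_iff.mpr fun i hi => pow_ne_zero _ fun hc => ?_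
      have h1 : (1 : F) = (z i)⁻¹ * z0 := sub_eq_zero.mp hc
      have h2 : z i * 1 = z i * ((z i)⁻¹ * z0) := congrArg (z i * ·) h1
      rw [mul_one, ← mul_assoc, mul_inv_cancel₀ (hz0 i), one_mul] at h2
      exact (Finset.mem_erase.mp hi).1 (hinj h2)
  -- uniform bound on b
  obtain ⟨C, hC0, hC⟩ : ∃ C : ℝ, 0 ≤ C ∧ ∀ k, ‖b k‖ * ‖z0‖ ^ k ≤ C := by
    obtain ⟨N1, hN1⟩ := keyT2 1 one_pos
    set d := (Polynomial.taylor z0 (wpP z m m0 N1)).natDegree with hddef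
    set S := ∑ k ∈ Finset.range (d+1),
      ‖(Polynomial.taylor z0 (wpP z m m0 N1)).coeff k‖ * ‖z0‖ ^ k with hSdef
    have hS0 : 0 ≤ S := Finset.sum_nonneg fun i _ => by positivity
    refine ⟨1 + S, by linarith, fun k => ?_⟩
    have hTb : ‖(Polynomial.taylor z0 (wpP z m m0 N1)).coeff k‖ * ‖z0‖ ^ k ≤ S := by
      by_cases hk : k ≤ d
      · exact Finset.single_le_sum
          (f := fun k => ‖(Polynomial.taylor z0 (wpP z m m0 N1)).coeff k‖ * ‖z0‖ ^ k)
          (fun i _ => by positivity) (Finset.mem_range.mpr (by omega))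
      · rw [Polynomial.coeff_eq_zero_of_natDegree_lt (by omega)]
        simpa using hS0
    have hdiff : ‖b k - (Polynomial.taylor z0 (wpP z m m0 N1)).coeff k‖ * ‖z0‖ ^ k ≤ 1 := by
      rw [norm_sub_rev]
      exact hN1 N1 le_rfl k
    have := aux_norm_add_mul_le (x := b k - (Polynomial.taylor z0 (wpP z m m0 N1)).coeff k)
      (y := (Polynomial.taylor z0 (wpP z m m0 N1)).coeff k) (C := 1 + S) (pow_nonneg hρ.le k)
      (hdiff.trans (by linarith)) (hTb.trans (by linarith))
    simpa using this
  -- conclusion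
  refine ⟨‖z0‖, hρ, b, ?_, hb0, hbμ⟩
  intro w hw
  have hsumb : Summable (fun k : ℕ => b k * (w - z0) ^ k) := by
    apply aux_summable
    have hbd : ∀ k : ℕ, ‖b k * (w - z0) ^ k‖ ≤ C * (‖w - z0‖ / ‖z0‖) ^ k := by
      intro k
      rw [norm_mul, norm_pow]
      calc ‖b k‖ * ‖w - z0‖ ^ k = (‖b k‖ * ‖z0‖ ^ k) * (‖w - z0‖ / ‖z0‖) ^ k := by
            rw [div_pow]
            field_simp
        _ ≤ C * (‖w - z0‖ / ‖z0‖) ^ k :=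
            mul_le_mul_of_nonneg_right (hC k) (by positivity)
    have hgeo : Tendsto (fun k : ℕ => C * (‖w - z0‖ / ‖z0‖) ^ k) atTop (𝓝 0) := by
      have := tendsto_pow_atTop_nhds_zero_of_lt_one
        (by positivity) ((div_lt_one hρ).mpr hw)
      simpa using this.const_mul C
    exact squeeze_zero (fun k => norm_nonneg _) hbd hgeo
  refine tendsto_nhds_unique (heval w) ?_
  rw [Metric.tendsto_atTop]
  intro ε hε
  obtain ⟨N1, hN1⟩ := keyT2 (ε/2) (by positivity)
  refine ⟨N1, fun N hN => ?_⟩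
  rw [dist_eq_norm]
  have hNexp : (wpP z m m0 N).eval w
      = ∑' k : ℕ, (Polynomial.taylor z0 (wpP z m m0 N)).coeff k * (w - z0) ^ k := by
    rw [← Polynomial.taylor_eval_sub z0]
    exact aux_eval_tsum _
  rw [hNexp]
  have hTsum : Summable (fun k : ℕ =>
      (Polynomial.taylor z0 (wpP z m m0 N)).coeff k * (w - z0) ^ k) := by
    apply summable_of_ne_finset_zero
      (s := Finset.range ((Polynomial.taylor z0 (wpP z m m0 N)).natDegree + 1))
    intro i hi
    rw [Polynomial.coeff_eq_zero_of_natDegree_lt, zero_mul]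
    simpa [Nat.lt_succ_iff] using Finset.mem_range.not.mp hi
  rw [← Summable.tsum_sub hTsum hsumb]
  have heq : ∀ k : ℕ, (Polynomial.taylor z0 (wpP z m m0 N)).coeff k * (w - z0) ^ k
      - b k * (w - z0) ^ k
      = ((Polynomial.taylor z0 (wpP z m m0 N)).coeff k - b k) * (w - z0) ^ k := by
    intro k; ring
  simp_rw [heq]
  have hbnd : ∀ k : ℕ,
      ‖((Polynomial.taylor z0 (wpP z m m0 N)).coeff k - b k) * (w - z0) ^ k‖ ≤ ε/2 := by
    intro k
    rw [norm_mul, norm_pow]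
    calc ‖(Polynomial.taylor z0 (wpP z m m0 N)).coeff k - b k‖ * ‖w - z0‖ ^ k
        ≤ ‖(Polynomial.taylor z0 (wpP z m m0 N)).coeff k - b k‖ * ‖z0‖ ^ k :=
          mul_le_mul_of_nonneg_left (pow_le_pow_left₀ (norm_nonneg _) hw.le k) (norm_nonneg _)
      _ ≤ ε/2 := hN1 N hN k
  calc ‖∑' k : ℕ, ((Polynomial.taylor z0 (wpP z m m0 N)).coeff k - b k) * (w - z0) ^ k‖
      ≤ ε/2 := IsUltrametricDist.norm_tsum_le_of_forall_le_of_nonneg (by positivity) hbnd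
    _ < ε := by linarith

end WPAux

/-- **Weierstrass products.** Given distinct nonzero `z_n` with `|z_n| → ∞`,
multiplicities `m_n ≥ 1` and `m_0 ≥ 0`, the partial products of
`z^{m_0} ∏ (1 − z/z_n)^{m_n}` converge in every Gauss norm `|·|_r` to an entire
function with a zero of multiplicity `m_0` at `0`, a zero of multiplicity `m_n` at
each `z_n`, and no other zeros. -/
theorem stmt17 {F : Type*} [NontriviallyNormedField F] [CompleteSpace F] [IsAlgClosed F]
    (hna : IsNonarchimedean (fun x : F => ‖x‖))
    (z : ℕ → F) (hinj : Function.Injective z) (hz0 : ∀ n : ℕ, z n ≠ 0)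
    (hz : Filter.Tendsto (fun n : ℕ => ‖z n‖) Filter.atTop Filter.atTop)
    (m : ℕ → ℕ) (hm : ∀ n : ℕ, 0 < m n) (m0 : ℕ) :
    ∃ a : ℕ → F, Entire a ∧
      (∀ r : ℝ, 0 < r →
        Filter.Tendsto
          (fun N : ℕ => pNorm
            (fun j : ℕ =>
              ((Polynomial.X ^ m0 *
                ∏ n ∈ Finset.range N,
                  (1 - Polynomial.C (z n)⁻¹ * Polynomial.X) ^ m n : Polynomial F).coeff j
                - a j)) r)
          Filter.atTop (nhds 0)) ∧
      (∀ j < m0, a j = 0) ∧ a m0 ≠ 0 ∧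
      (∀ n : ℕ, HasOrderAt (psEval a) (z n) (m n)) ∧
      (∀ w : F, psEval a w = 0 → w = 0 ∨ ∃ n : ℕ, w = z n) := by
  classical
  have hud : IsUltrametricDist F :=
    IsUltrametricDist.isUltrametricDist_of_isNonarchimedean_norm hna
  obtain ⟨a, ha, key2⟩ := wp_limit z hz0 hz m m0
  have hEnt : Entire a := wp_entire key2
  have heval : ∀ w : F, Filter.Tendsto (fun N => (wpP z m m0 N).eval w)
      Filter.atTop (nhds (psEval a w)) :=
    fun w => (wp_eval_tendsto hEnt key2 w).2
  refine ⟨a, hEnt, ?_, ?_, ?_, ?_, ?_⟩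
  · -- convergence in every Gauss norm
    intro r hr
    rw [Metric.tendsto_atTop]
    intro ε hε
    obtain ⟨N1, hN1⟩ := key2 r hr (ε/2) (by positivity)
    refine ⟨N1, fun N hN => ?_⟩
    rw [Real.dist_eq, sub_zero]
    have hle : pNorm (fun j : ℕ => ((wpP z m m0 N).coeff j - a j)) r ≤ ε/2 :=
      Real.iSup_le (fun j => hN1 N hN j) (by positivity)
    have hge : (0:ℝ) ≤ pNorm (fun j : ℕ => ((wpP z m m0 N).coeff j - a j)) r :=
      Real.iSup_nonneg fun j => by positivity
    have habs : |pNorm (fun j : ℕ => ((wpP z m m0 N).coeff j - a j)) r| < ε := by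
      rw [abs_of_nonneg hge]; linarith
    exact habs
  · -- coefficients below m0 vanish
    intro j hj
    have hcoeff : ∀ N, (wpP z m m0 N).coeff j = 0 := by
      intro N
      unfold wpP
      rw [mul_comm, Polynomial.coeff_mul_X_pow']
      simp [Nat.not_le.mpr hj]
    exact tendsto_nhds_unique (ha j) (by simpa [hcoeff] using tendsto_const_nhds)
  · -- coefficient m0 is 1
    have hcoeff : ∀ N, (wpP z m m0 N).coeff m0 = 1 := by
      intro N
      unfold wpP
      rw [mul_comm, Polynomial.coeff_mul_X_pow', if_pos le_rfl, Nat.sub_self,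
        Polynomial.coeff_zero_eq_eval_zero]
      simp [Polynomial.eval_prod]
    have h1 : a m0 = 1 :=
      tendsto_nhds_unique (ha m0) (by simpa [hcoeff] using tendsto_const_nhds)
    rw [h1]
    exact one_ne_zero
  · -- order at each z n
    intro n
    obtain ⟨δ, hδ, b, h1, h2, h3⟩ := wp_hasOrderAt hinj hz0 hz heval n
    exact ⟨δ, hδ, b, h1, h2, h3⟩
  · -- no other zeros
    intro w hw
    by_contra hcon
    push_neg at hcon
    exact wp_ne_zero hz0 hz heval w hcon.1 (fun n => hcon.2 n) hw
end
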